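/- arXiv:1505.00653 — 3 statements merged into one kernel-verified Lean document; each statement's English description precedes it below -/
import Mathlib

section
/- For any long positive root μ, the inversion set N(w_{θ,μ}) of the minimal-length element taking θ to μ is contained in H ∖ {θ}, where H = {γ ∈ Δ⁺ | (γ,θ) ≠ 0}. -/
open scoped RealInnerProductSpace

/-- Data of a crystallographic root system in a real inner product space `V`,
with simple roots indexed by a finite type `ι`. -/
structure RSD (ι V : Type*) [Fintype ι] [NormedAddCommGroup V]
    [InnerProductSpace ℝ V] where
  /-- The simple roots. -/
  sroot : ι → V
  /-- The set of roots. -/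
  Δ : Set V
  finite : Δ.Finite
  zero_not_mem : (0 : V) ∉ Δ
  sroot_mem : ∀ i, sroot i ∈ Δ
  sroot_indep : LinearIndependent ℝ sroot
  neg_mem : ∀ a ∈ Δ, -a ∈ Δ
  /-- Crystallographic condition. -/
  crys : ∀ a ∈ Δ, ∀ b ∈ Δ, ∃ n : ℤ, 2 * ⟪a, b⟫ / ⟪a, a⟫ = (n : ℝ)
  /-- The reflection associated with a vector (only specified on roots). -/
  reflect : V → (V ≃ₗ[ℝ] V)
  reflect_apply : ∀ a ∈ Δ, ∀ v : V,
    reflect a v = v - (2 * ⟪a, v⟫ / ⟪a, a⟫) • a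
  reflect_root_mem : ∀ a ∈ Δ, ∀ b ∈ Δ, reflect a b ∈ Δ
  /-- Every root is a nonnegative or nonpositive integral combination of simple roots. -/
  decomp : ∀ a ∈ Δ, (∃ c : ι → ℕ, a = ∑ i, (c i : ℝ) • sroot i) ∨
      (∃ c : ι → ℕ, a = -∑ i, (c i : ℝ) • sroot i)
  /-- Irreducibility. -/
  irred : ∀ S T : Set V, S ∪ T = Δ → (∀ a ∈ S, ∀ b ∈ T, ⟪a, b⟫ = 0) →
      S = ∅ ∨ T = ∅

namespace RSD

variable {ι V : Type*} [Fintype ι] [NormedAddCommGroup V] [InnerProductSpace ℝ V]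
  (R : RSD ι V)

/-- The set of positive roots. -/
def pos : Set V := {a ∈ R.Δ | ∃ c : ι → ℕ, a = ∑ i, (c i : ℝ) • R.sroot i}

/-- `R.le μ γ` means `μ ≼ γ`, i.e. `γ - μ` is a nonnegative integral combination
of simple roots. -/
def le (μ γ : V) : Prop := ∃ c : ι → ℕ, γ - μ = ∑ i, (c i : ℝ) • R.sroot i

/-- The Weyl group, generated by the simple reflections. -/
def W : Subgroup (V ≃ₗ[ℝ] V) :=
  Subgroup.closure (Set.range fun i => R.reflect (R.sroot i))

/-- The inversion set `N(w) = {γ ∈ Δ⁺ ∣ w γ ∈ -Δ⁺}`. -/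
def N (w : V ≃ₗ[ℝ] V) : Set V := {γ ∈ R.pos | -(w γ) ∈ R.pos}

/-- The length of `w`: minimal length of an expression of `w` as a product of
simple reflections. -/
noncomputable def len (w : V ≃ₗ[ℝ] V) : ℕ :=
  sInf {n | ∃ l : List ι, l.length = n ∧
    (l.map fun i => R.reflect (R.sroot i)).prod = w}

/-- The coroot `a∨ = 2a/(a,a)`. -/
@[nolint unusedArguments]
noncomputable def coroot (_R : RSD ι V) (a : V) : V := (2 / ⟪a, a⟫) • a

/-- `ρ`, the half-sum of the positive roots. -/
noncomputable def rho : V :=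
  (2⁻¹ : ℝ) • ∑ a ∈ (R.finite.subset (fun a ha => ha.1 : R.pos ⊆ R.Δ)).toFinset, a

/-- `R.HtIs γ n` : the height of `γ` is `n`. -/
def HtIs (γ : V) (n : ℕ) : Prop :=
  ∃ c : ι → ℕ, γ = ∑ i, (c i : ℝ) • R.sroot i ∧ ∑ i, c i = n

/-- A long root: a root of maximal squared length. -/
def IsLong (γ : V) : Prop := γ ∈ R.Δ ∧ ∀ b ∈ R.Δ, ⟪b, b⟫ ≤ ⟪γ, γ⟫

/-- The highest root. -/
def IsHighest (θ : V) : Prop := θ ∈ R.pos ∧ ∀ γ ∈ R.pos, R.le γ θ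

/-- Simply-laced: all roots have the same length. -/
def SimplyLaced : Prop := ∀ a ∈ R.Δ, ∀ b ∈ R.Δ, ⟪a, a⟫ = ⟪b, b⟫

/-- A minimal inversion complete set. -/
def IsMICS (F : Set (V ≃ₗ[ℝ] V)) : Prop :=
  (∀ w ∈ F, w ∈ R.W) ∧ (⋃ w ∈ F, R.N w) = R.pos ∧
    ∀ F' ⊂ F, (⋃ w ∈ F', R.N w) ≠ R.pos

end RSD

namespace RSD

variable {ι V : Type*} [Fintype ι] [NormedAddCommGroup V] [InnerProductSpace ℝ V]
  (R : RSD ι V)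

lemma root_ne_zero {a : V} (ha : a ∈ R.Δ) : a ≠ 0 := fun h => R.zero_not_mem (h ▸ ha)

lemma inner_root_ne_zero {a : V} (ha : a ∈ R.Δ) : ⟪a, a⟫ ≠ 0 :=
  inner_self_ne_zero.2 (R.root_ne_zero ha)

lemma reflect_inner {a : V} (ha : a ∈ R.Δ) (x y : V) :
    ⟪R.reflect a x, R.reflect a y⟫ = ⟪x, y⟫ := by
  rw [R.reflect_apply a ha, R.reflect_apply a ha]
  have h := R.inner_root_ne_zero ha
  simp only [inner_sub_left, inner_sub_right, real_inner_smul_left, real_inner_smul_right,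
    real_inner_comm x a]
  field_simp
  ring

lemma reflect_reflect {a : V} (ha : a ∈ R.Δ) (v : V) :
    R.reflect a (R.reflect a v) = v := by
  rw [R.reflect_apply a ha, R.reflect_apply a ha]
  have h := R.inner_root_ne_zero ha
  simp only [inner_sub_right, real_inner_smul_right]
  field_simp
  module

lemma reflect_mul_self {a : V} (ha : a ∈ R.Δ) : R.reflect a * R.reflect a = 1 :=
  LinearEquiv.ext fun v => R.reflect_reflect ha v

lemma pos_subset : R.pos ⊆ R.Δ := fun _ h => h.1

lemma not_neg_pos {γ : V} (h : γ ∈ R.pos) : -γ ∉ R.pos := by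
  rintro ⟨h2, c, hc⟩
  obtain ⟨h1, d, hd⟩ := h
  have hsum : ∑ i, ((d i + c i : ℝ)) • R.sroot i = 0 := by
    simp only [add_smul, Finset.sum_add_distrib, ← hd, ← hc]
    abel
  have := Fintype.linearIndependent_iff.1 R.sroot_indep (fun i => (d i + c i : ℝ)) hsum
  have hd0 : ∀ i, (d i : ℝ) = 0 := by
    intro i
    have h1 : (d i : ℝ) + (c i : ℝ) = 0 := this i
    have : (0:ℝ) ≤ (d i : ℝ) := Nat.cast_nonneg _
    have : (0:ℝ) ≤ (c i : ℝ) := Nat.cast_nonneg _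
    linarith
  apply R.root_ne_zero h1
  rw [hd]
  exact Finset.sum_eq_zero fun i _ => by rw [hd0 i, zero_smul]

lemma reflect_conj (g : V ≃ₗ[ℝ] V) (hg : ∀ x y : V, ⟪g x, g y⟫ = ⟪x, y⟫)
    {a : V} (ha : a ∈ R.Δ) (hga : g a ∈ R.Δ) :
    R.reflect (g a) = g * R.reflect a * g⁻¹ := by
  refine LinearEquiv.ext fun v => ?_
  have h1 : (g * R.reflect a * g⁻¹) v = g (R.reflect a (g⁻¹ v)) := rfl
  rw [h1, R.reflect_apply _ hga, R.reflect_apply a ha, map_sub, map_smul]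
  have h2 : g (g⁻¹ v) = v := g.apply_symm_apply v
  have h3 : ⟪g a, v⟫ = ⟪a, g⁻¹ v⟫ := by
    conv_lhs => rw [← h2]
    exact hg a _
  have h4 : ⟪g a, g a⟫ = ⟪a, a⟫ := hg a a
  rw [h2, h3, h4]

lemma reflect_smul {a : V} (ha : a ∈ R.Δ) {c : ℝ} (hc : c ≠ 0) (hca : c • a ∈ R.Δ) :
    R.reflect (c • a) = R.reflect a := by
  refine LinearEquiv.ext fun v => ?_
  rw [R.reflect_apply _ hca, R.reflect_apply a ha]
  have h := R.inner_root_ne_zero ha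
  rw [real_inner_smul_left, real_inner_smul_left, real_inner_smul_right, smul_smul]
  congr 1
  have h2 : 2 * (c * ⟪a, v⟫) / (c * (c * ⟪a, a⟫)) * c = 2 * ⟪a, v⟫ / ⟪a, a⟫ := by
    field_simp
  rw [h2]

lemma prod_maps (l : List ι) {a : V} (ha : a ∈ R.Δ) :
    (l.map fun i => R.reflect (R.sroot i)).prod a ∈ R.Δ := by
  induction l generalizing a with
  | nil => simpa using ha
  | cons i t ih =>
    have : ((i :: t).map fun i => R.reflect (R.sroot i)).prod a
        = R.reflect (R.sroot i) ((t.map fun i => R.reflect (R.sroot i)).prod a) := rfl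
    rw [this]
    exact R.reflect_root_mem _ (R.sroot_mem i) _ (ih ha)

lemma prod_inner (l : List ι) (x y : V) :
    ⟪(l.map fun i => R.reflect (R.sroot i)).prod x,
      (l.map fun i => R.reflect (R.sroot i)).prod y⟫ = ⟪x, y⟫ := by
  induction l generalizing x y with
  | nil => simp
  | cons i t ih =>
    have h1 : ((i :: t).map fun i => R.reflect (R.sroot i)).prod x
        = R.reflect (R.sroot i) ((t.map fun i => R.reflect (R.sroot i)).prod x) := rfl
    have h2 : ((i :: t).map fun i => R.reflect (R.sroot i)).prod y
        = R.reflect (R.sroot i) ((t.map fun i => R.reflect (R.sroot i)).prod y) := rfl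
    rw [h1, h2, R.reflect_inner (R.sroot_mem i), ih]

lemma prod_mem_W (l : List ι) : (l.map fun i => R.reflect (R.sroot i)).prod ∈ R.W := by
  induction l with
  | nil => exact one_mem _
  | cons i t ih =>
    rw [List.map_cons, List.prod_cons]
    exact mul_mem (Subgroup.subset_closure ⟨i, rfl⟩) ih

lemma prod_reverse (l : List ι) :
    (l.reverse.map fun i => R.reflect (R.sroot i)).prod
      = ((l.map fun i => R.reflect (R.sroot i)).prod)⁻¹ := by
  induction l with
  | nil => simp
  | cons i t ih =>
    rw [List.reverse_cons, List.map_append, List.prod_append, ih, List.map_cons,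
      List.prod_cons, List.map_cons, List.map_nil, List.prod_cons, List.prod_nil,
      mul_one, mul_inv_rev]
    congr 1
    rw [eq_comm, inv_eq_iff_mul_eq_one]
    exact R.reflect_mul_self (R.sroot_mem i)

lemma mem_W_word {w : V ≃ₗ[ℝ] V} (hw : w ∈ R.W) :
    ∃ l : List ι, (l.map fun i => R.reflect (R.sroot i)).prod = w := by
  induction hw using Subgroup.closure_induction with
  | mem x hx =>
    obtain ⟨i, rfl⟩ := hx
    exact ⟨[i], by simp⟩
  | one => exact ⟨[], by simp⟩
  | mul x y _ _ hx hy =>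
    obtain ⟨l1, h1⟩ := hx
    obtain ⟨l2, h2⟩ := hy
    exact ⟨l1 ++ l2, by rw [List.map_append, List.prod_append, h1, h2]⟩
  | inv x _ hx =>
    obtain ⟨l, rfl⟩ := hx
    exact ⟨l.reverse, R.prod_reverse l⟩

lemma pos_smul_sroot {β : V} (i : ι) (hβ : β ∈ R.pos)
    (h : -(R.reflect (R.sroot i) β) ∈ R.pos) :
    ∃ c : ℝ, c ≠ 0 ∧ β = c • R.sroot i := by
  classical
  obtain ⟨hβΔ, d, hd⟩ := hβ
  obtain ⟨_, c, hc⟩ := h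
  rw [R.reflect_apply _ (R.sroot_mem i)] at hc
  set k := 2 * ⟪R.sroot i, β⟫ / ⟪R.sroot i, R.sroot i⟫ with hk
  have hsum : ∑ j, ((d j : ℝ) + (c j : ℝ) - (if j = i then k else 0)) • R.sroot j = 0 := by
    simp only [sub_smul, add_smul, Finset.sum_sub_distrib, Finset.sum_add_distrib, ← hd, ← hc]
    have : ∑ j, (if j = i then k else 0) • R.sroot j = k • R.sroot i := by
      rw [Finset.sum_eq_single i]
      · simp
      · intro b _ hb; simp [hb]
      · intro hi; exact absurd (Finset.mem_univ i) hi
    rw [this]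
    abel
  have hlin := Fintype.linearIndependent_iff.1 R.sroot_indep _ hsum
  have hdj : ∀ j, j ≠ i → (d j : ℝ) = 0 := by
    intro j hj
    have h1 : (d j : ℝ) + (c j : ℝ) - (if j = i then k else 0) = 0 := hlin j
    rw [if_neg hj, sub_zero] at h1
    have : (0:ℝ) ≤ (d j : ℝ) := Nat.cast_nonneg _
    have : (0:ℝ) ≤ (c j : ℝ) := Nat.cast_nonneg _
    linarith
  refine ⟨(d i : ℝ), ?_, ?_⟩
  · intro h0
    apply R.root_ne_zero hβΔ
    rw [hd]
    refine Finset.sum_eq_zero fun j _ => ?_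
    by_cases hj : j = i
    · rw [hj, h0, zero_smul]
    · rw [hdj j hj, zero_smul]
  · rw [hd, Finset.sum_eq_single i]
    · intro b _ hb; rw [hdj b hb, zero_smul]
    · intro hi; exact absurd (Finset.mem_univ i) hi

lemma key_lemma (l : List ι) (w : V ≃ₗ[ℝ] V)
    (hl : (l.map fun i => R.reflect (R.sroot i)).prod = w) {γ : V} (hγ : γ ∈ R.N w) :
    ∃ l' : List ι, l'.length + 1 = l.length ∧
      (l'.map fun i => R.reflect (R.sroot i)).prod = w * R.reflect γ := by
  induction l generalizing w with
  | nil =>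
    exfalso
    simp only [List.map_nil, List.prod_nil] at hl
    obtain ⟨h1, h2⟩ := hγ
    rw [← hl] at h2
    exact R.not_neg_pos h1 h2
  | cons i t ih =>
    set u := (t.map fun i => R.reflect (R.sroot i)).prod with hu
    have hwu : w = R.reflect (R.sroot i) * u := by
      rw [← hl, List.map_cons, List.prod_cons]
    obtain ⟨hγp, hγn⟩ := hγ
    have hγΔ : γ ∈ R.Δ := hγp.1
    have huγΔ : u γ ∈ R.Δ := R.prod_maps t hγΔ
    rcases R.decomp _ huγΔ with hpos | hneg
    · -- u γ is positive, so reflect (sroot i) (u γ) is "negative", u γ = c • sroot i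
      have huγp : u γ ∈ R.pos := ⟨huγΔ, hpos⟩
      have hneg' : -(R.reflect (R.sroot i) (u γ)) ∈ R.pos := by
        have : R.reflect (R.sroot i) (u γ) = w γ := by rw [hwu]; rfl
        rwa [this]
      obtain ⟨c, hc0, hcβ⟩ := R.pos_smul_sroot i huγp hneg'
      have hrefleq : R.reflect (u γ) = R.reflect (R.sroot i) := by
        rw [hcβ]
        exact R.reflect_smul (R.sroot_mem i) hc0 (hcβ ▸ huγΔ)
      have hconj : R.reflect (u γ) = u * R.reflect γ * u⁻¹ :=
        R.reflect_conj u (R.prod_inner t) hγΔ huγΔ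
      have heq : R.reflect (R.sroot i) = u * R.reflect γ * u⁻¹ := by rw [← hrefleq, hconj]
      have hfin : w * R.reflect γ = u := by
        rw [hwu, heq]
        calc u * R.reflect γ * u⁻¹ * u * R.reflect γ
            = u * (R.reflect γ * R.reflect γ) := by group
          _ = u := by rw [R.reflect_mul_self hγΔ, mul_one]
      exact ⟨t, by simp, by rw [hfin]⟩
    · -- u γ is negative, so γ ∈ N u
      have hγNu : γ ∈ R.N u := by
        refine ⟨hγp, ?_⟩
        obtain ⟨c, hc⟩ := hneg
        refine ⟨R.neg_mem _ huγΔ, c, by rw [hc, neg_neg]⟩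
      obtain ⟨t', ht'len, ht'⟩ := ih u rfl hγNu
      refine ⟨i :: t', by simp [← ht'len], ?_⟩
      rw [List.map_cons, List.prod_cons, ht', hwu, mul_assoc]

lemma len_spec {w : V ≃ₗ[ℝ] V} (hw : w ∈ R.W) :
    ∃ l : List ι, l.length = R.len w ∧ (l.map fun i => R.reflect (R.sroot i)).prod = w := by
  have hne : {n | ∃ l : List ι, l.length = n ∧
      (l.map fun i => R.reflect (R.sroot i)).prod = w}.Nonempty := by
    obtain ⟨l, hl⟩ := R.mem_W_word hw
    exact ⟨l.length, l, rfl, hl⟩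
  exact Nat.sInf_mem hne

lemma len_le {w : V ≃ₗ[ℝ] V} (l : List ι)
    (hl : (l.map fun i => R.reflect (R.sroot i)).prod = w) : R.len w ≤ l.length :=
  Nat.sInf_le ⟨l, rfl, hl⟩

end RSD



/-- For a long positive root `μ`, the inversion set of the
minimal-length element taking `θ` to `μ` is contained in `H ∖ {θ}`,
where `H = {γ ∈ Δ⁺ ∣ (γ,θ) ≠ 0}`. -/
theorem inversion_set_of_w_theta_mu_subset
    {ι V : Type*} [Fintype ι] [NormedAddCommGroup V] [InnerProductSpace ℝ V]
    (R : RSD ι V) (θ μ : V) (hθ : R.IsHighest θ) (hμl : R.IsLong μ) (hμ : μ ∈ R.pos)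
    (w : V ≃ₗ[ℝ] V) (hw : w ∈ R.W) (hwθ : w θ = μ)
    (hmin : ∀ w' ∈ R.W, w' θ = μ → R.len w ≤ R.len w') :
    R.N w ⊆ {γ ∈ R.pos | ⟪γ, θ⟫ ≠ 0} \ {θ} := by
  intro γ hγ
  obtain ⟨hγp, hγn⟩ := hγ
  have hγne : γ ≠ θ := by
    intro h
    subst h
    rw [hwθ] at hγn
    exact R.not_neg_pos hμ hγn
  refine ⟨⟨hγp, ?_⟩, hγne⟩
  intro h0
  obtain ⟨l, hlen, hl⟩ := R.len_spec hw
  obtain ⟨l', hl'len, hl'⟩ := R.key_lemma l w hl ⟨hγp, hγn⟩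
  set w' := w * R.reflect γ with hw'
  have hw'W : w' ∈ R.W := hl' ▸ R.prod_mem_W l'
  have hw'θ : w' θ = μ := by
    have h1 : w' θ = w (R.reflect γ θ) := rfl
    rw [h1, R.reflect_apply γ hγp.1, h0]
    simp [hwθ]
  have hminle := hmin w' hw'W hw'θ
  have h2 : R.len w' ≤ l'.length := R.len_le l' hl'
  omega
end

section
/- Suppose the highest root θ is a fundamental weight and let α̂ be the unique simple root with (θ, α̂) ≠ 0. Then (θ, α̂∨) = 1, the coefficient of α̂ in θ equals 2, and for every positive root γ one has (γ, θ∨) = [γ : α̂]; moreover θ is the unique positive root with [γ : α̂] = 2. -/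
open scoped RealInnerProductSpace

/-- If the highest root `θ` is a fundamental weight with `α̂ = sroot ih`
the unique simple root not orthogonal to `θ`, then `(θ, α̂∨) = 1`, `[θ:α̂] = 2`,
`(γ, θ∨) = [γ:α̂]` for every positive root `γ`, and `θ` is the unique positive root
with `α̂`-coefficient `2`. -/
theorem highest_root_fundamental_weight_props
    {ι V : Type*} [Fintype ι] [NormedAddCommGroup V] [InnerProductSpace ℝ V]
    (R : RSD ι V) (θ : V) (hθ : R.IsHighest θ) (ih : ι)
    (hfund1 : ⟪θ, R.coroot (R.sroot ih)⟫ = 1)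
    (hfund0 : ∀ j : ι, j ≠ ih → ⟪θ, R.coroot (R.sroot j)⟫ = 0) :
    ⟪θ, R.coroot (R.sroot ih)⟫ = 1 ∧
      (∀ c : ι → ℕ, θ = ∑ k, (c k : ℝ) • R.sroot k → c ih = 2) ∧
      (∀ γ ∈ R.pos, ∀ c : ι → ℕ, γ = ∑ k, (c k : ℝ) • R.sroot k →
        ⟪γ, R.coroot θ⟫ = (c ih : ℝ)) ∧
      (∀ γ ∈ R.pos, ∀ c : ι → ℕ, γ = ∑ k, (c k : ℝ) • R.sroot k → c ih = 2 → γ = θ) := by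

  classical
  obtain ⟨hθpos, hθhigh⟩ := hθ
  obtain ⟨hθΔ, c₀, hc₀⟩ := hθpos
  have hli := Fintype.linearIndependent_iff.mp R.sroot_indep
  have huniq : ∀ f g : ι → ℝ, ∑ k, f k • R.sroot k = ∑ k, g k • R.sroot k →
      ∀ k, f k = g k := by
    intro f g h k
    have h0 : ∑ i, (f i - g i) • R.sroot i = 0 := by
      simp [sub_smul, Finset.sum_sub_distrib, h]
    have := hli _ h0 k
    linarith
  have hθne : θ ≠ 0 := fun h => R.zero_not_mem (h ▸ hθΔ)
  have hθθpos : (0:ℝ) < ⟪θ, θ⟫ := by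
    have := norm_pos_iff.mpr hθne
    rw [real_inner_self_eq_norm_mul_norm]
    positivity
  have hsΔ := R.sroot_mem
  have hsne : ∀ j, R.sroot j ≠ 0 := fun j h => R.zero_not_mem (h ▸ hsΔ j)
  have hsspos : ∀ j, (0:ℝ) < ⟪R.sroot j, R.sroot j⟫ :=
    fun j => by
      have := norm_pos_iff.mpr (hsne j)
      rw [real_inner_self_eq_norm_mul_norm]
      positivity
  have horth : ∀ j, j ≠ ih → ⟪θ, R.sroot j⟫ = 0 := by
    intro j hj
    have h := hfund0 j hj
    rw [RSD.coroot, real_inner_smul_right] at h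
    have h2 : (2 / ⟪R.sroot j, R.sroot j⟫ : ℝ) ≠ 0 :=
      div_ne_zero two_ne_zero (hsspos j).ne'
    exact (mul_eq_zero.mp h).resolve_left h2
  have hθα : ⟪θ, R.sroot ih⟫ = ⟪R.sroot ih, R.sroot ih⟫ / 2 := by
    have h := hfund1
    rw [RSD.coroot, real_inner_smul_right] at h
    have hs := (hsspos ih).ne'
    field_simp at h
    linarith
  obtain ⟨n, hn⟩ := R.crys θ hθΔ (R.sroot ih) (hsΔ ih)
  have hnpos : (0:ℝ) < (n:ℝ) := by
    rw [← hn, hθα]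
    have h1 := hsspos ih
    exact div_pos (by linarith) hθθpos
  have hcor : ∀ v : V, ⟪v, R.coroot θ⟫ = 2 * ⟪θ, v⟫ / ⟪θ, θ⟫ := by
    intro v
    rw [RSD.coroot, real_inner_smul_right, real_inner_comm v θ]
    ring
  have hsum : ∀ (c : ι → ℕ) (γ : V), γ = ∑ k, (c k : ℝ) • R.sroot k →
      ⟪γ, R.coroot θ⟫ = (c ih : ℝ) * n := by
    intro c γ hγ
    rw [hγ, sum_inner, Finset.sum_eq_single ih]
    · rw [real_inner_smul_left, hcor, hn]
    · intro j _ hj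
      rw [real_inner_smul_left, hcor, horth j hj]
      ring
    · simp
  have hθ2 : ⟪θ, R.coroot θ⟫ = 2 := by
    rw [hcor]
    field_simp
  have hθnea : θ ≠ R.sroot ih := by
    intro h
    rw [h, RSD.coroot, real_inner_smul_right] at hfund1
    have hs := (hsspos ih).ne'
    field_simp at hfund1
    norm_num at hfund1
  have hkey : (c₀ ih : ℝ) * n = 2 := by
    rw [← hsum c₀ θ hc₀, hθ2]
  have hδ : R.sroot ih = ∑ k, (if k = ih then (1:ℝ) else 0) • R.sroot k := by
    simp [ite_smul]
  -- rule out c₀ ih = 1, n = 2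
  have hcase : ¬ (c₀ ih = 1 ∧ n = 2) := by
    rintro ⟨h1, h2⟩
    have hrefl := R.reflect_apply θ hθΔ (R.sroot ih)
    rw [hn, h2] at hrefl
    have hmem : -(R.sroot ih - ((2:ℤ):ℝ) • θ) ∈ R.Δ := by
      rw [← hrefl]
      exact R.neg_mem _ (R.reflect_root_mem θ hθΔ _ (hsΔ ih))
    have hγeq : -(R.sroot ih - ((2:ℤ):ℝ) • θ) = (2:ℝ) • θ - R.sroot ih := by
      push_cast
      abel
    rw [hγeq] at hmem
    set c' : ι → ℕ := fun k => if k = ih then 1 else 2 * c₀ k with hc'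
    have hγdec : (2:ℝ) • θ - R.sroot ih = ∑ k, (c' k : ℝ) • R.sroot k := by
      rw [hc₀, Finset.smul_sum, hδ, ← Finset.sum_sub_distrib]
      refine Finset.sum_congr rfl fun k _ => ?_
      rw [smul_smul, ← sub_smul]
      congr 1
      by_cases hk : k = ih
      · subst hk
        simp [hc', h1]
        norm_num
      · simp [hc', hk]
    obtain ⟨d, hd⟩ := hθhigh _ ⟨hmem, c', hγdec⟩
    have hd' : R.sroot ih = ∑ k, ((c₀ k : ℝ) + d k) • R.sroot k := by
      have : θ - ((2:ℝ) • θ - R.sroot ih) = R.sroot ih - θ := by module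
      rw [this] at hd
      have : R.sroot ih = θ + ∑ k, (d k : ℝ) • R.sroot k := by
        rw [← hd]; module
      rw [this, hc₀, ← Finset.sum_add_distrib]
      exact Finset.sum_congr rfl fun k _ => by rw [← add_smul]
    have hco := fun k => huniq _ _ (hd'.symm.trans hδ) k
    have hc0 : ∀ k, k ≠ ih → (c₀ k : ℝ) = 0 := by
      intro k hk
      have := hco k
      simp [hk] at this
      have h1 : (0:ℝ) ≤ (c₀ k : ℝ) := Nat.cast_nonneg _
      have h2 : (0:ℝ) ≤ (d k : ℝ) := Nat.cast_nonneg _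
      linarith
    have : θ = R.sroot ih := by
      rw [hc₀, Finset.sum_eq_single ih]
      · rw [h1]; simp
      · intro j _ hj
        rw [hc0 j hj, zero_smul]
      · simp
    exact hθnea this
  -- deduce c₀ ih = 2 and n = 1
  have hnint : 1 ≤ n := by exact_mod_cast hnpos
  have hkeyZ : (c₀ ih : ℤ) * n = 2 := by exact_mod_cast hkey
  have hc2 : c₀ ih = 2 ∧ n = 1 := by
    by_cases h1 : c₀ ih = 1
    · exfalso
      apply hcase
      refine ⟨h1, ?_⟩
      rw [h1] at hkeyZ
      omega
    · have ha1 : (1:ℤ) ≤ (c₀ ih : ℤ) := by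
        rcases Nat.eq_zero_or_pos (c₀ ih) with h | h
        · rw [h] at hkeyZ; omega
        · exact_mod_cast h
      have ha2 : (2:ℤ) ≤ (c₀ ih : ℤ) := by
        have : (c₀ ih : ℤ) ≠ 1 := by exact_mod_cast h1
        omega
      have h2n : 2 * n ≤ (c₀ ih : ℤ) * n := by nlinarith
      have h2n' : 2 * n ≤ 2 := by rw [hkeyZ] at h2n; exact h2n
      have hn1 : n = 1 := by omega
      have : (c₀ ih : ℤ) = 2 := by rw [hn1, mul_one] at hkeyZ; exact hkeyZ
      exact ⟨by exact_mod_cast this, hn1⟩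
  obtain ⟨hc₀ih, hn1⟩ := hc2
  have hsum1 : ∀ (c : ι → ℕ) (γ : V), γ = ∑ k, (c k : ℝ) • R.sroot k →
      ⟪γ, R.coroot θ⟫ = (c ih : ℝ) := by
    intro c γ hγ
    rw [hsum c γ hγ, hn1]
    norm_num
  refine ⟨hfund1, ?_, ?_, ?_⟩
  · intro c hc
    have := huniq _ _ (hc.symm.trans hc₀) ih
    have : c ih = c₀ ih := by exact_mod_cast this
    rw [this, hc₀ih]
  · intro γ _ c hc
    exact hsum1 c γ hc
  · intro γ hγ c hc hcih
    have hγΔ := hγ.1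
    have hip2 : ⟪γ, R.coroot θ⟫ = 2 := by
      rw [hsum1 c γ hc, hcih]
      norm_num
    have hrefl := R.reflect_apply θ hθΔ γ
    have h2 : 2 * ⟪θ, γ⟫ / ⟪θ, θ⟫ = 2 := by rw [← hcor, hip2]
    rw [h2] at hrefl
    have hmem : -(γ - (2:ℝ) • θ) ∈ R.Δ := by
      rw [← hrefl]
      exact R.neg_mem _ (R.reflect_root_mem θ hθΔ γ hγΔ)
    obtain ⟨d, hd⟩ := hθhigh γ hγ
    have hηdec : -(γ - (2:ℝ) • θ) = ∑ k, ((c₀ k + d k : ℕ) : ℝ) • R.sroot k := by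
      have : -(γ - (2:ℝ) • θ) = θ + (θ - γ) := by module
      rw [this, hd, hc₀, ← Finset.sum_add_distrib]
      refine Finset.sum_congr rfl fun k _ => ?_
      rw [← add_smul]
      push_cast
      ring_nf
    obtain ⟨e, he⟩ := hθhigh _ ⟨hmem, _, hηdec⟩
    have hsum0 : ∑ k, ((d k : ℝ) + e k) • R.sroot k = 0 := by
      have h1 : θ - -(γ - (2:ℝ) • θ) = -(θ - γ) := by module
      rw [h1] at he
      have : ∑ k, (d k : ℝ) • R.sroot k + ∑ k, (e k : ℝ) • R.sroot k = 0 := by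
        rw [← hd, ← he]; abel
      rw [← this, ← Finset.sum_add_distrib]
      exact Finset.sum_congr rfl fun k _ => by rw [add_smul]
    have hd0 : ∀ k, (d k : ℝ) = 0 := by
      intro k
      have := hli _ hsum0 k
      have h1 : (0:ℝ) ≤ (d k : ℝ) := Nat.cast_nonneg _
      have h2 : (0:ℝ) ≤ (e k : ℝ) := Nat.cast_nonneg _
      linarith
    have : θ - γ = 0 := by
      rw [hd]
      exact Finset.sum_eq_zero fun k _ => by rw [hd0 k, zero_smul]
    rw [sub_eq_zero] at this
    exact this.symm
end

section
/- Suppose Δ is simply-laced, the highest root θ is a fundamental weight, and α̂ is the unique simple root not orthogonal to θ. Let ŵ = w_{θ−α̂, α̂} be the minimal-length element taking θ − α̂ to α̂. Then ŵ fixes θ, ŵ(α̂) = θ − α̂, and ŵ is an involution: ŵ² = 1. -/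
open scoped RealInnerProductSpace

namespace Stmt17

open Finset
open scoped Classical

variable {ι V : Type*} [Fintype ι] [NormedAddCommGroup V] [InnerProductSpace ℝ V]

variable (R : RSD ι V)

lemma root_ne_zero {a : V} (ha : a ∈ R.Δ) : a ≠ 0 := fun h => R.zero_not_mem (h ▸ ha)

lemma inner_self_pos' {a : V} (ha : a ∈ R.Δ) : (0:ℝ) < ⟪a, a⟫ :=
  lt_of_le_of_ne real_inner_self_nonneg
    (Ne.symm (inner_self_ne_zero.mpr (root_ne_zero R ha)))

lemma refl_inner {a : V} (ha : a ∈ R.Δ) (x y : V) :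
    ⟪R.reflect a x, R.reflect a y⟫ = ⟪x, y⟫ := by
  have h : ⟪a, a⟫ ≠ (0:ℝ) := ne_of_gt (inner_self_pos' R ha)
  rw [R.reflect_apply a ha x, R.reflect_apply a ha y]
  simp only [inner_sub_left, inner_sub_right, real_inner_smul_left, real_inner_smul_right,
    real_inner_comm a x, real_inner_comm a y]
  field_simp
  ring

lemma refl_refl {a : V} (ha : a ∈ R.Δ) (x : V) :
    R.reflect a (R.reflect a x) = x := by
  have h : ⟪a, a⟫ ≠ (0:ℝ) := ne_of_gt (inner_self_pos' R ha)
  rw [R.reflect_apply a ha x, R.reflect_apply a ha]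
  simp only [inner_sub_right, real_inner_smul_right]
  have e : (2 * (⟪a, x⟫ - 2 * ⟪a, x⟫ / ⟪a, a⟫ * ⟪a, a⟫) / ⟪a, a⟫ : ℝ) = -(2 * ⟪a, x⟫ / ⟪a, a⟫) := by
    field_simp
    ring
  rw [e, neg_smul]
  abel

lemma refl_sq {a : V} (ha : a ∈ R.Δ) : R.reflect a * R.reflect a = 1 := by
  apply LinearEquiv.ext
  intro x
  exact refl_refl R ha x

lemma refl_inv {a : V} (ha : a ∈ R.Δ) : (R.reflect a)⁻¹ = R.reflect a :=
  inv_eq_of_mul_eq_one_left (refl_sq R ha)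

lemma refl_self {a : V} (ha : a ∈ R.Δ) : R.reflect a a = -a := by
  have h : ⟪a, a⟫ ≠ (0:ℝ) := ne_of_gt (inner_self_pos' R ha)
  rw [R.reflect_apply a ha a]
  have e : (2 * ⟪a, a⟫ / ⟪a, a⟫ : ℝ) = 2 := by field_simp
  rw [e]
  module

lemma refl_orth {a : V} (ha : a ∈ R.Δ) {x : V} (hx : ⟪a, x⟫ = (0:ℝ)) :
    R.reflect a x = x := by
  rw [R.reflect_apply a ha x, hx]
  simp


/-- Word product of simple reflections. -/
noncomputable def pw (l : List ι) : V ≃ₗ[ℝ] V :=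
  (l.map fun i => R.reflect (R.sroot i)).prod

lemma pw_nil : pw R ([] : List ι) = 1 := rfl

lemma pw_cons (i : ι) (l : List ι) :
    pw R (i :: l) = R.reflect (R.sroot i) * pw R l := by simp [pw]

lemma pw_append (l₁ l₂ : List ι) : pw R (l₁ ++ l₂) = pw R l₁ * pw R l₂ := by
  simp [pw]

lemma pw_concat (l : List ι) (i : ι) :
    pw R (l ++ [i]) = pw R l * R.reflect (R.sroot i) := by simp [pw]

lemma refl_mem_W (i : ι) : R.reflect (R.sroot i) ∈ R.W :=
  Subgroup.subset_closure ⟨i, rfl⟩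

lemma pw_mem_W (l : List ι) : pw R l ∈ R.W := by
  induction l with
  | nil => exact Subgroup.one_mem _
  | cons i l ihl => rw [pw_cons]; exact Subgroup.mul_mem _ (refl_mem_W R i) ihl

lemma pw_reverse (l : List ι) : pw R l.reverse = (pw R l)⁻¹ := by
  induction l with
  | nil => simp [pw]
  | cons i l ihl =>
      rw [List.reverse_cons, pw_concat, pw_cons, ihl, mul_inv_rev,
        refl_inv R (R.sroot_mem i)]

lemma W_props {w : V ≃ₗ[ℝ] V} (hw : w ∈ R.W) :
    ((∀ a ∈ R.Δ, w a ∈ R.Δ) ∧ (∀ x y : V, ⟪w x, w y⟫ = ⟪x, y⟫)) ∧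
    ((∀ a ∈ R.Δ, w⁻¹ a ∈ R.Δ) ∧ (∀ x y : V, ⟪w⁻¹ x, w⁻¹ y⟫ = ⟪x, y⟫)) := by
  induction hw using Subgroup.closure_induction with
  | mem x hx =>
      obtain ⟨i, rfl⟩ := hx
      constructor
      · exact ⟨fun a ha => R.reflect_root_mem _ (R.sroot_mem i) a ha,
          refl_inner R (R.sroot_mem i)⟩
      · rw [refl_inv R (R.sroot_mem i)]
        exact ⟨fun a ha => R.reflect_root_mem _ (R.sroot_mem i) a ha,
          refl_inner R (R.sroot_mem i)⟩
  | one => simp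
  | mul x y hx hy hx' hy' =>
      obtain ⟨⟨hx1, hx2⟩, ⟨hx3, hx4⟩⟩ := hx'
      obtain ⟨⟨hy1, hy2⟩, ⟨hy3, hy4⟩⟩ := hy'
      constructor
      · exact ⟨fun a ha => hx1 _ (hy1 a ha), fun u v => by
          show ⟪x (y u), x (y v)⟫ = _
          rw [hx2, hy2]⟩
      · rw [mul_inv_rev]
        exact ⟨fun a ha => hy3 _ (hx3 a ha), fun u v => by
          show ⟪y⁻¹ (x⁻¹ u), y⁻¹ (x⁻¹ v)⟫ = _
          rw [hy4, hx4]⟩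
  | inv x hx hx' =>
      obtain ⟨h1, h2⟩ := hx'
      rw [inv_inv]
      exact ⟨h2, h1⟩

lemma W_root {w : V ≃ₗ[ℝ] V} (hw : w ∈ R.W) {a : V} (ha : a ∈ R.Δ) : w a ∈ R.Δ :=
  (W_props R hw).1.1 a ha

lemma W_inner {w : V ≃ₗ[ℝ] V} (hw : w ∈ R.W) (x y : V) : ⟪w x, w y⟫ = ⟪x, y⟫ :=
  (W_props R hw).1.2 x y

lemma exists_word {w : V ≃ₗ[ℝ] V} (hw : w ∈ R.W) : ∃ l : List ι, pw R l = w := by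
  induction hw using Subgroup.closure_induction with
  | mem x hx => obtain ⟨i, rfl⟩ := hx; exact ⟨[i], by simp [pw]⟩
  | one => exact ⟨[], rfl⟩
  | mul x y hx hy hx' hy' =>
      obtain ⟨l₁, rfl⟩ := hx'
      obtain ⟨l₂, rfl⟩ := hy'
      exact ⟨l₁ ++ l₂, pw_append R l₁ l₂⟩
  | inv x hx hx' =>
      obtain ⟨l, rfl⟩ := hx'
      exact ⟨l.reverse, pw_reverse R l⟩

lemma len_le {w : V ≃ₗ[ℝ] V} {l : List ι} (h : pw R l = w) : R.len w ≤ l.length :=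
  Nat.sInf_le ⟨l, rfl, h⟩

lemma len_spec {w : V ≃ₗ[ℝ] V} (hw : w ∈ R.W) :
    ∃ l : List ι, pw R l = w ∧ l.length = R.len w := by
  obtain ⟨l₀, hl₀⟩ := exists_word R hw
  have hne : {n | ∃ l : List ι, l.length = n ∧
      (l.map fun i => R.reflect (R.sroot i)).prod = w}.Nonempty :=
    ⟨l₀.length, l₀, rfl, hl₀⟩
  obtain ⟨l, hlen, hprod⟩ := Nat.sInf_mem hne
  exact ⟨l, hprod, hlen⟩

lemma len_one : R.len (1 : V ≃ₗ[ℝ] V) = 0 :=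
  Nat.le_zero.mp (len_le R (pw_nil R))

lemma eq_one_of_len_zero {w : V ≃ₗ[ℝ] V} (hw : w ∈ R.W) (h : R.len w = 0) : w = 1 := by
  obtain ⟨l, hprod, hlen⟩ := len_spec R hw
  rw [h, List.length_eq_zero_iff] at hlen
  rw [hlen] at hprod
  exact hprod.symm

lemma len_inv {w : V ≃ₗ[ℝ] V} (hw : w ∈ R.W) : R.len w⁻¹ = R.len w := by
  have key : ∀ v : V ≃ₗ[ℝ] V, v ∈ R.W → R.len v⁻¹ ≤ R.len v := by
    intro v hv
    obtain ⟨l, hprod, hlen⟩ := len_spec R hv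
    calc R.len v⁻¹ ≤ l.reverse.length := len_le R (by rw [pw_reverse, hprod])
    _ = R.len v := by rw [List.length_reverse, hlen]
  refine le_antisymm (key w hw) ?_
  have := key w⁻¹ (Subgroup.inv_mem _ hw)
  rwa [inv_inv] at this

lemma len_mul_refl_le {w : V ≃ₗ[ℝ] V} (hw : w ∈ R.W) (i : ι) :
    R.len (w * R.reflect (R.sroot i)) ≤ R.len w + 1 := by
  obtain ⟨l, hprod, hlen⟩ := len_spec R hw
  calc R.len (w * R.reflect (R.sroot i)) ≤ (l ++ [i]).length :=
        len_le R (by rw [pw_concat, hprod])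
  _ = R.len w + 1 := by simp [hlen]


/-! ### Coordinates -/

def Rep (a : V) (c : ι → ℝ) : Prop := a = ∑ i, c i • R.sroot i

lemma rep_unique {a : V} {c d : ι → ℝ} (hc : Rep R a c) (hd : Rep R a d) : c = d := by
  have h0 : ∑ i, (c i - d i) • R.sroot i = 0 := by
    simp only [sub_smul, Finset.sum_sub_distrib]
    rw [← hc, ← hd]
    simp
  funext i
  have := Fintype.linearIndependent_iff.mp R.sroot_indep _ h0 i
  linarith

noncomputable def cf (a : V) : ι → ℝ :=
  if h : ∃ c, Rep R a c then h.choose else 0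

lemma cf_rep {a : V} (h : ∃ c, Rep R a c) : Rep R a (cf R a) := by
  rw [cf, dif_pos h]
  exact h.choose_spec

lemma cf_eq {a : V} {c : ι → ℝ} (hc : Rep R a c) : cf R a = c :=
  rep_unique R (cf_rep R ⟨c, hc⟩) hc

lemma rep_of_natrep {a : V} {c : ι → ℕ} (h : a = ∑ i, (c i : ℝ) • R.sroot i) :
    Rep R a (fun i => (c i : ℝ)) := h

lemma root_rep {a : V} (ha : a ∈ R.Δ) : ∃ c, Rep R a c := by
  rcases R.decomp a ha with ⟨c, hc⟩ | ⟨c, hc⟩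
  · exact ⟨_, rep_of_natrep R hc⟩
  · refine ⟨fun i => -(c i : ℝ), ?_⟩
    rw [Rep, hc]
    simp [neg_smul]

lemma rep_neg {a : V} {c : ι → ℝ} (hc : Rep R a c) : Rep R (-a) (-c) := by
  rw [Rep, hc]
  simp [neg_smul]

lemma cf_neg {a : V} (h : ∃ c, Rep R a c) : cf R (-a) = -cf R a :=
  cf_eq R (rep_neg R (cf_rep R h))

noncomputable def pc (a : V) : ι → ℕ :=
  if h : ∃ c : ι → ℕ, a = ∑ i, (c i : ℝ) • R.sroot i then h.choose else 0

lemma pc_rep {a : V} (h : ∃ c : ι → ℕ, a = ∑ i, (c i : ℝ) • R.sroot i) :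
    a = ∑ i, (pc R a i : ℝ) • R.sroot i := by
  rw [pc, dif_pos h]
  exact h.choose_spec

lemma cf_of_pos {a : V} (ha : a ∈ R.pos) : cf R a = fun i => (pc R a i : ℝ) :=
  cf_eq R (rep_of_natrep R (pc_rep R ha.2))

lemma cf_nonneg_of_pos {a : V} (ha : a ∈ R.pos) (i : ι) : 0 ≤ cf R a i := by
  rw [cf_of_pos R ha]
  positivity

noncomputable def htN (a : V) : ℕ := ∑ i, pc R a i

noncomputable def ht (a : V) : ℝ := ∑ i, cf R a i

lemma ht_eq_htN {a : V} (ha : a ∈ R.pos) : ht R a = (htN R a : ℝ) := by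
  rw [ht, htN, cf_of_pos R ha]
  push_cast
  rfl

lemma root_pos_or_neg {a : V} (ha : a ∈ R.Δ) : a ∈ R.pos ∨ -a ∈ R.pos := by
  rcases R.decomp a ha with ⟨c, hc⟩ | ⟨c, hc⟩
  · exact Or.inl ⟨ha, c, hc⟩
  · refine Or.inr ⟨R.neg_mem a ha, c, ?_⟩
    rw [hc, neg_neg]

lemma not_pos_and_neg {a : V} (h1 : a ∈ R.pos) (h2 : -a ∈ R.pos) : False := by
  have e1 : cf R a = fun i => (pc R a i : ℝ) := cf_of_pos R h1
  have e2 : cf R (-a) = -cf R a := cf_neg R ⟨_, cf_rep R ⟨_, rep_of_natrep R (pc_rep R h1.2)⟩⟩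
  have e3 : cf R (-a) = fun i => (pc R (-a) i : ℝ) := cf_of_pos R h2
  have hz : ∀ i, cf R a i = 0 := by
    intro i
    have p1 : (0:ℝ) ≤ cf R a i := cf_nonneg_of_pos R h1 i
    have p2 : (0:ℝ) ≤ cf R (-a) i := cf_nonneg_of_pos R h2 i
    rw [e2] at p2
    simp only [Pi.neg_apply] at p2
    linarith
  have : a = 0 := by
    have := cf_rep R (root_rep R h1.1)
    rw [Rep] at this
    rw [this]
    apply Finset.sum_eq_zero
    intro i _
    rw [hz i, zero_smul]
  exact R.zero_not_mem (this ▸ h1.1)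

lemma pos_root_ne_pos_neg {a : V} (h1 : a ∈ R.pos) : -a ∉ R.pos := fun h2 =>
  not_pos_and_neg R h1 h2

lemma cf_sroot (i : ι) : cf R (R.sroot i) = fun j => if j = i then 1 else 0 := by
  apply cf_eq
  rw [Rep]
  symm
  rw [Finset.sum_eq_single i (fun j _ hj => by rw [if_neg hj, zero_smul])
    (fun h => absurd (Finset.mem_univ i) h)]
  rw [if_pos rfl, one_smul]

lemma htN_pos {a : V} (ha : a ∈ R.pos) : 1 ≤ htN R a := by
  by_contra h
  push_neg at h
  interval_cases h' : htN R a
  · have hz : ∀ i, pc R a i = 0 := by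
      intro i
      have : pc R a i ≤ htN R a := Finset.single_le_sum (f := fun i => pc R a i)
        (fun _ _ => Nat.zero_le _) (Finset.mem_univ i)
      omega
    have : a = 0 := by
      rw [pc_rep R ha.2]
      apply Finset.sum_eq_zero
      intro i _
      rw [hz i]
      simp
    exact R.zero_not_mem (this ▸ ha.1)


/-! ### Geometry under the fundamental-weight hypotheses -/

def Fund (θ : V) (i0 : ι) : Prop :=
  R.SimplyLaced ∧ R.IsHighest θ ∧ ⟪θ, R.coroot (R.sroot i0)⟫ = 1 ∧
    ∀ j : ι, j ≠ i0 → ⟪θ, R.sroot j⟫ = 0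

variable {θ : V} {i0 : ι}

lemma theta_pos (hF : Fund R θ i0) : θ ∈ R.pos := hF.2.1.1

lemma theta_root (hF : Fund R θ i0) : θ ∈ R.Δ := (theta_pos R hF).1

lemma t_pos (hF : Fund R θ i0) : (0:ℝ) < ⟪θ, θ⟫ := inner_self_pos' R (theta_root R hF)

lemma norm_root (hF : Fund R θ i0) {a : V} (ha : a ∈ R.Δ) : ⟪a, a⟫ = ⟪θ, θ⟫ :=
  hF.1 a ha θ (theta_root R hF)

lemma sroot_pos (i : ι) : R.sroot i ∈ R.pos := by
  refine ⟨R.sroot_mem i, fun j => if j = i then 1 else 0, ?_⟩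
  symm
  rw [Finset.sum_eq_single i (fun j _ hj => by simp only []; rw [if_neg hj]; simp)
    (fun h => absurd (Finset.mem_univ i) h)]
  simp

lemma inner_theta_alpha (hF : Fund R θ i0) : ⟪θ, R.sroot i0⟫ = ⟪θ, θ⟫ / 2 := by
  have h1 := hF.2.2.1
  rw [RSD.coroot, real_inner_smul_right, norm_root R hF (R.sroot_mem i0)] at h1
  have ht := t_pos R hF
  field_simp at h1
  linarith

/-- The fundamental pairing computation: `⟪θ, a⟫ = cf a i0 * (t/2)` for `a` in the
span of the simple roots. -/
lemma inner_theta (hF : Fund R θ i0) {a : V} (h : ∃ c, Rep R a c) :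
    ⟪θ, a⟫ = cf R a i0 * (⟪θ, θ⟫ / 2) := by
  have hrep := cf_rep R h
  rw [Rep] at hrep
  conv_lhs => rw [hrep]
  rw [inner_sum]
  rw [Finset.sum_eq_single i0 (fun j _ hj => by
    rw [real_inner_smul_right, hF.2.2.2 j hj, mul_zero])
    (fun h => absurd (Finset.mem_univ i0) h)]
  rw [real_inner_smul_right, inner_theta_alpha R hF, mul_comm]

lemma inner_lt_t (hF : Fund R θ i0) {a b : V} (ha : a ∈ R.Δ) (hb : b ∈ R.Δ)
    (hab : a ≠ b) : ⟪a, b⟫ < ⟪θ, θ⟫ := by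
  have h0 : (0:ℝ) < ⟪a - b, a - b⟫ :=
    lt_of_le_of_ne real_inner_self_nonneg
      (Ne.symm (inner_self_ne_zero.mpr (sub_ne_zero.mpr hab)))
  have e : ⟪a - b, a - b⟫ = ⟪a,a⟫ - 2 * ⟪a,b⟫ + ⟪b,b⟫ := by
    simp only [inner_sub_left, inner_sub_right, real_inner_comm b a]
    ring
  rw [e, norm_root R hF ha, norm_root R hF hb] at h0
  linarith

/-- Pairing dichotomy for distinct non-opposite roots in the simply-laced case. -/
lemma pairing_vals (hF : Fund R θ i0) {a b : V} (ha : a ∈ R.Δ) (hb : b ∈ R.Δ)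
    (h1 : a ≠ b) (h2 : a ≠ -b) :
    ⟪a, b⟫ = ⟪θ, θ⟫/2 ∨ ⟪a, b⟫ = 0 ∨ ⟪a, b⟫ = -(⟪θ, θ⟫/2) := by
  obtain ⟨n, hn⟩ := R.crys a ha b hb
  rw [norm_root R hF ha] at hn
  have ht := t_pos R hF
  have hub : ⟪a, b⟫ < ⟪θ, θ⟫ := inner_lt_t R hF ha hb h1
  have hlb : -⟪θ, θ⟫ < ⟪a, b⟫ := by
    have := inner_lt_t R hF ha (R.neg_mem b hb) h2
    rw [inner_neg_right] at this
    linarith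
  have hv : ⟪a, b⟫ = (n : ℝ) * (⟪θ, θ⟫ / 2) := by
    field_simp at hn
    linarith
  have hn1 : (-2 : ℝ) < (n:ℝ) := by
    by_contra hc
    push_neg at hc
    nlinarith
  have hn2 : ((n:ℝ) : ℝ) < 2 := by
    by_contra hc
    push_neg at hc
    nlinarith
  have : n = -1 ∨ n = 0 ∨ n = 1 := by
    have l1 : (-2:ℤ) < n := by exact_mod_cast hn1
    have l2 : n < 2 := by exact_mod_cast hn2
    omega
  rcases this with h | h | h <;> rw [h] at hv <;> [right;right;left] <;> simp at hv ⊢ <;>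
    try linarith
  · right; linarith
  · left; linarith


lemma rep_add {a b : V} {c d : ι → ℝ} (hc : Rep R a c) (hd : Rep R b d) :
    Rep R (a + b) (c + d) := by
  rw [Rep, hc, hd, ← Finset.sum_add_distrib]
  exact Finset.sum_congr rfl fun i _ => by rw [Pi.add_apply, add_smul]

lemma rep_sub {a b : V} {c d : ι → ℝ} (hc : Rep R a c) (hd : Rep R b d) :
    Rep R (a - b) (c - d) := by
  rw [Rep, hc, hd, ← Finset.sum_sub_distrib]
  exact Finset.sum_congr rfl fun i _ => by rw [Pi.sub_apply, sub_smul]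

lemma rep_sroot (i : ι) : Rep R (R.sroot i) (fun j => if j = i then 1 else 0) := by
  have := cf_sroot R i
  have h : ∃ c, Rep R (R.sroot i) c := ⟨_, rep_of_natrep R (pc_rep R (sroot_pos R i).2)⟩
  have := cf_rep R h
  rwa [cf_sroot R i] at this

lemma rep_smul {a : V} {c : ι → ℝ} (hc : Rep R a c) (r : ℝ) : Rep R (r • a) (r • c) := by
  rw [Rep, hc, Finset.smul_sum]
  exact Finset.sum_congr rfl fun i _ => by rw [Pi.smul_apply, smul_smul, smul_eq_mul]

/-- the coefficient of a reflected vector -/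
lemma rep_reflect {a x : V} (ha : a ∈ R.Δ) {c : ι → ℝ} (hc : Rep R x c) (i : ι) :
    Rep R (R.reflect (R.sroot i) x) (c - (2 * ⟪R.sroot i, x⟫ / ⟪R.sroot i, R.sroot i⟫) •
      ((fun j => if j = i then 1 else 0) : ι → ℝ)) := by
  rw [R.reflect_apply _ (R.sroot_mem i) x]
  exact rep_sub R hc (rep_smul R (rep_sroot R i) _)

lemma cf_theta_i0 (hF : Fund R θ i0) : cf R θ i0 = 2 := by
  have h := inner_theta R hF (a := θ) (root_rep R (theta_root R hF))
  have ht := t_pos R hF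
  have : cf R θ i0 * (⟪θ, θ⟫ / 2) = 2 * (⟪θ, θ⟫ / 2) := by rw [← h]; ring
  exact mul_right_cancel₀ (by positivity) this

lemma eq_theta_of_lvl2 (hF : Fund R θ i0) {a : V} (ha : a ∈ R.Δ)
    (h2 : cf R a i0 = 2) : a = θ := by
  have h := inner_theta R hF (root_rep R ha)
  rw [h2] at h
  have ht := t_pos R hF
  by_contra hne
  rcases eq_or_ne a (-θ) with h' | h'
  · rw [h', inner_neg_right] at h
    linarith
  · rcases pairing_vals R hF (theta_root R hF) ha (Ne.symm hne) (by
      intro hc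
      apply h'
      rw [hc]
      simp) with hv | hv | hv <;> linarith

lemma pos_of_lvl_pos {a : V} (ha : a ∈ R.Δ) (h : 0 < cf R a i0) : a ∈ R.pos := by
  rcases root_pos_or_neg R ha with hp | hp
  · exact hp
  · exfalso
    have h1 : 0 ≤ cf R (-a) i0 := cf_nonneg_of_pos R hp i0
    rw [cf_neg R (root_rep R ha)] at h1
    simp only [Pi.neg_apply] at h1
    linarith

lemma eq_zero_of_cf_zero {a : V} (h : ∃ c, Rep R a c) (hz : ∀ i, cf R a i = 0) :
    a = 0 := by
  have := cf_rep R h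
  rw [Rep] at this
  rw [this]
  exact Finset.sum_eq_zero fun i _ => by rw [hz i, zero_smul]

/-- A root supported on one simple root is `±` that simple root. -/
lemma root_supp_single (hF : Fund R θ i0) {a : V} (ha : a ∈ R.Δ) (i : ι)
    (h : ∀ j, j ≠ i → cf R a j = 0) : a = R.sroot i ∨ a = -R.sroot i := by
  have hrep := cf_rep R (root_rep R ha)
  have he : a = cf R a i • R.sroot i := by
    rw [Rep] at hrep
    conv_lhs => rw [hrep]
    rw [Finset.sum_eq_single i (fun j _ hj => by rw [h j hj, zero_smul])
      (fun hh => absurd (Finset.mem_univ i) hh)]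
  have hn : ⟪a, a⟫ = ⟪θ, θ⟫ := norm_root R hF ha
  have hn2 : ⟪R.sroot i, R.sroot i⟫ = ⟪θ, θ⟫ := norm_root R hF (R.sroot_mem i)
  rw [he] at hn
  rw [real_inner_smul_left, real_inner_smul_right, hn2] at hn
  have ht := t_pos R hF
  have : cf R a i = 1 ∨ cf R a i = -1 := by
    have h1 : cf R a i * cf R a i = 1 := by
      have hne : ⟪θ, θ⟫ ≠ 0 := ne_of_gt ht
      have h2' : (cf R a i * cf R a i) * ⟪θ, θ⟫ = 1 * ⟪θ, θ⟫ := by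
        rw [one_mul, mul_assoc]
        exact hn
      exact mul_right_cancel₀ hne h2'
    rcases mul_self_eq_one_iff.mp h1 with h | h
    · exact Or.inl h
    · exact Or.inr h
  rcases this with h1 | h1 <;> rw [h1] at he
  · left; rw [he, one_smul]
  · right; rw [he]; simp

lemma cf_int_cases (hF : Fund R θ i0) {a : V} (ha : a ∈ R.Δ) (i : ι) (hne1 : a ≠ R.sroot i)
    (hne2 : a ≠ -R.sroot i) :
    ⟪R.sroot i, a⟫ = ⟪θ, θ⟫/2 ∨ ⟪R.sroot i, a⟫ = 0 ∨ ⟪R.sroot i, a⟫ = -(⟪θ, θ⟫/2) := by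
  have := pairing_vals R hF (R.sroot_mem i) ha (fun h => hne1 (by rw [h]))
    (fun h => hne2 (by rw [h]; simp))
  rcases this with h | h | h
  · exact Or.inl h
  · exact Or.inr (Or.inl h)
  · exact Or.inr (Or.inr h)

/-- reflect with pairing `t/2` subtracts the root. -/
lemma refl_eq_sub (hF : Fund R θ i0) {x : V} (i : ι) (hx : ⟪R.sroot i, x⟫ = ⟪θ, θ⟫/2) :
    R.reflect (R.sroot i) x = x - R.sroot i := by
  rw [R.reflect_apply _ (R.sroot_mem i) x, hx, norm_root R hF (R.sroot_mem i)]
  have ht := t_pos R hF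
  have : (2 * (⟪θ, θ⟫ / 2) / ⟪θ, θ⟫ : ℝ) = 1 := by field_simp
  rw [this, one_smul]

lemma refl_eq_add (hF : Fund R θ i0) {x : V} (i : ι) (hx : ⟪R.sroot i, x⟫ = -(⟪θ, θ⟫/2)) :
    R.reflect (R.sroot i) x = x + R.sroot i := by
  rw [R.reflect_apply _ (R.sroot_mem i) x, hx, norm_root R hF (R.sroot_mem i)]
  have ht := t_pos R hF
  have : (2 * -(⟪θ, θ⟫ / 2) / ⟪θ, θ⟫ : ℝ) = -1 := by field_simp
  rw [this]
  simp only [neg_smul, one_smul, sub_neg_eq_add]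

lemma refl_eq_self {x : V} (i : ι) (hx : ⟪R.sroot i, x⟫ = 0) :
    R.reflect (R.sroot i) x = x := refl_orth R (R.sroot_mem i) hx


lemma cf_reflect {x : V} (h : ∃ c, Rep R x c) (i : ι) :
    cf R (R.reflect (R.sroot i) x) = cf R x - (2 * ⟪R.sroot i, x⟫ / ⟪R.sroot i, R.sroot i⟫) •
      ((fun j => if j = i then 1 else 0) : ι → ℝ) :=
  cf_eq R (rep_reflect R (R.sroot_mem i) (cf_rep R h) i)

lemma cf_reflect_ne {x : V} (h : ∃ c, Rep R x c) {i k : ι} (hk : k ≠ i) :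
    cf R (R.reflect (R.sroot i) x) k = cf R x k := by
  rw [cf_reflect R h i]
  simp [hk]

lemma inner_alpha_theta (hF : Fund R θ i0) : ⟪R.sroot i0, θ⟫ = ⟪θ, θ⟫/2 := by
  rw [real_inner_comm]
  exact inner_theta_alpha R hF

lemma beta_eq_reflect (hF : Fund R θ i0) :
    R.reflect (R.sroot i0) θ = θ - R.sroot i0 :=
  refl_eq_sub R hF i0 (inner_alpha_theta R hF)

lemma beta_root (hF : Fund R θ i0) : θ - R.sroot i0 ∈ R.Δ := by
  rw [← beta_eq_reflect R hF]
  exact R.reflect_root_mem _ (R.sroot_mem i0) θ (theta_root R hF)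

lemma cf_beta (hF : Fund R θ i0) :
    cf R (θ - R.sroot i0) = cf R θ - ((fun j => if j = i0 then 1 else 0) : ι → ℝ) :=
  cf_eq R (rep_sub R (cf_rep R (root_rep R (theta_root R hF))) (rep_sroot R i0))

lemma cf_beta_i0 (hF : Fund R θ i0) : cf R (θ - R.sroot i0) i0 = 1 := by
  rw [cf_beta R hF]
  simp [cf_theta_i0 R hF]
  norm_num

lemma beta_pos (hF : Fund R θ i0) : θ - R.sroot i0 ∈ R.pos :=
  pos_of_lvl_pos R (beta_root R hF) (by rw [cf_beta_i0 R hF]; norm_num)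

lemma cf_neg_sroot (i : ι) :
    cf R (-R.sroot i) = -((fun j => if j = i then 1 else 0) : ι → ℝ) := by
  rw [cf_neg R ⟨_, rep_sroot R i⟩, cf_sroot R i]

lemma theta_ne_sroot (hF : Fund R θ i0) (i : ι) : θ ≠ R.sroot i := by
  intro h
  have h1 : cf R θ i0 = 2 := cf_theta_i0 R hF
  rw [h, cf_sroot R i] at h1
  by_cases hi : i0 = i <;> simp [hi] at h1

lemma beta_ne_alpha (hF : Fund R θ i0) : θ - R.sroot i0 ≠ R.sroot i0 := by
  intro h
  have hj : ∀ j, j ≠ i0 → cf R θ j = 0 := by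
    intro j hji
    have := congrFun (congrArg (cf R) h) j
    rw [cf_beta R hF, cf_sroot R i0] at this
    simp only [Pi.sub_apply, if_neg hji] at this
    linarith
  rcases root_supp_single R hF (theta_root R hF) i0 hj with h' | h'
  · exact theta_ne_sroot R hF i0 h'
  · have h1 : cf R θ i0 = 2 := cf_theta_i0 R hF
    rw [h', cf_neg_sroot R i0] at h1
    simp at h1
    norm_num at h1

/-- level-0 positive roots pair non-positively with `α̂`. -/
lemma lvl0_inner_alpha (hF : Fund R θ i0) {η : V} (hη : η ∈ R.pos)
    (h0 : cf R η i0 = 0) :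
    ⟪R.sroot i0, η⟫ = 0 ∨ ⟪R.sroot i0, η⟫ = -(⟪θ, θ⟫/2) := by
  have hne1 : η ≠ R.sroot i0 := by
    intro h
    rw [h, cf_sroot R i0] at h0
    simp at h0
  have hne2 : η ≠ -R.sroot i0 := by
    intro h
    rw [h, cf_neg_sroot R i0] at h0
    simp at h0
  rcases cf_int_cases R hF hη.1 i0 hne1 hne2 with h | h | h
  · exfalso
    have hroot : η - R.sroot i0 ∈ R.Δ := by
      rw [← refl_eq_sub R hF i0 h]
      exact R.reflect_root_mem _ (R.sroot_mem i0) η hη.1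
    have hcf : cf R (η - R.sroot i0) =
        cf R η - ((fun j => if j = i0 then 1 else 0) : ι → ℝ) :=
      cf_eq R (rep_sub R (cf_rep R (root_rep R hη.1)) (rep_sroot R i0))
    rcases root_pos_or_neg R hroot with hp | hp
    · have := cf_nonneg_of_pos R hp i0
      rw [hcf] at this
      simp only [Pi.sub_apply, h0, if_pos rfl] at this
      norm_num at this
    · have hzz : ∀ j, cf R η j = 0 := by
        intro j
        rcases eq_or_ne j i0 with rfl | hj
        · exact h0
        · have h1 := cf_nonneg_of_pos R hp j
          have h2 : cf R (-(η - R.sroot i0)) = -cf R (η - R.sroot i0) :=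
            cf_neg R (root_rep R hroot)
          rw [h2] at h1
          simp only [Pi.neg_apply] at h1
          rw [hcf] at h1
          simp only [Pi.sub_apply, if_neg hj] at h1
          have h3 := cf_nonneg_of_pos R hη j
          linarith
      have : η = 0 := eq_zero_of_cf_zero R (root_rep R hη.1) hzz
      exact R.zero_not_mem (this ▸ hη.1)
  · exact Or.inl h
  · exact Or.inr h

/-- for a level-1 root `μ ≠ α̂` with `⟪α̂,μ⟫ = t/2`, `μ - α̂` is a level-0 positive root. -/
lemma lvl1_sub_alpha (hF : Fund R θ i0) {μ : V} (hμ : μ ∈ R.Δ) (h1 : cf R μ i0 = 1)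
    (hpair : ⟪R.sroot i0, μ⟫ = ⟪θ, θ⟫/2) (hne : μ ≠ R.sroot i0) :
    (μ - R.sroot i0) ∈ R.pos ∧ cf R (μ - R.sroot i0) i0 = 0 := by
  have hroot : μ - R.sroot i0 ∈ R.Δ := by
    rw [← refl_eq_sub R hF i0 hpair]
    exact R.reflect_root_mem _ (R.sroot_mem i0) μ hμ
  have hcf : cf R (μ - R.sroot i0) =
      cf R μ - ((fun j => if j = i0 then 1 else 0) : ι → ℝ) :=
    cf_eq R (rep_sub R (cf_rep R (root_rep R hμ)) (rep_sroot R i0))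
  have hcf0 : cf R (μ - R.sroot i0) i0 = 0 := by rw [hcf]; simp [h1]
  refine ⟨?_, hcf0⟩
  have hμpos : μ ∈ R.pos := pos_of_lvl_pos R hμ (by rw [h1]; norm_num)
  rcases root_pos_or_neg R hroot with hp | hp
  · exact hp
  · exfalso
    have hzz : ∀ j, j ≠ i0 → cf R μ j = 0 := by
      intro j hj
      have hnn := cf_nonneg_of_pos R hp j
      rw [cf_neg R (root_rep R hroot)] at hnn
      simp only [Pi.neg_apply] at hnn
      rw [hcf] at hnn
      simp only [Pi.sub_apply, if_neg hj] at hnn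
      have h3 := cf_nonneg_of_pos R hμpos j
      linarith
    rcases root_supp_single R hF hμ i0 hzz with h' | h'
    · exact hne h'
    · rw [h', cf_neg_sroot R i0] at h1
      simp at h1
      norm_num at h1

lemma sJ_fixes_theta (hF : Fund R θ i0) {j : ι} (hj : j ≠ i0) :
    R.reflect (R.sroot j) θ = θ := by
  apply refl_eq_self
  rw [real_inner_comm]
  exact hF.2.2.2 j hj

lemma pw_fixes_theta (hF : Fund R θ i0) {l : List ι} (hl : ∀ j ∈ l, j ≠ i0) :
    pw R l θ = θ := by
  induction l with
  | nil => rfl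
  | cons i l ihl =>
      rw [pw_cons]
      show R.reflect (R.sroot i) (pw R l θ) = θ
      rw [ihl (fun j hj => hl j (List.mem_cons_of_mem i hj)),
        sJ_fixes_theta R hF (hl i List.mem_cons_self)]


lemma pos_of_cf_pos {a : V} (ha : a ∈ R.Δ) {k : ι} (h : 0 < cf R a k) : a ∈ R.pos := by
  rcases root_pos_or_neg R ha with hp | hp
  · exact hp
  · exfalso
    have h1 : 0 ≤ cf R (-a) k := cf_nonneg_of_pos R hp k
    rw [cf_neg R (root_rep R ha)] at h1
    simp only [Pi.neg_apply] at h1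
    linarith

lemma ht_sroot (i : ι) : ht R (R.sroot i) = 1 := by
  rw [ht, cf_sroot R i]
  simp

lemma ht_sub_sroot {x : V} (h : ∃ c, Rep R x c) (i : ι) :
    ht R (x - R.sroot i) = ht R x - 1 := by
  rw [ht, ht, cf_eq R (rep_sub R (cf_rep R h) (rep_sroot R i))]
  simp only [Pi.sub_apply]
  rw [Finset.sum_sub_distrib]
  simp

lemma ht_add_sroot {x : V} (h : ∃ c, Rep R x c) (i : ι) :
    ht R (x + R.sroot i) = ht R x + 1 := by
  rw [ht, ht, cf_eq R (rep_add R (cf_rep R h) (rep_sroot R i))]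
  simp only [Pi.add_apply]
  rw [Finset.sum_add_distrib]
  simp

lemma cf_sub_sroot {x : V} (h : ∃ c, Rep R x c) (i : ι) :
    cf R (x - R.sroot i) = cf R x - ((fun j => if j = i then 1 else 0) : ι → ℝ) :=
  cf_eq R (rep_sub R (cf_rep R h) (rep_sroot R i))

lemma cf_add_sroot {x : V} (h : ∃ c, Rep R x c) (i : ι) :
    cf R (x + R.sroot i) = cf R x + ((fun j => if j = i then 1 else 0) : ι → ℝ) :=
  cf_eq R (rep_add R (cf_rep R h) (rep_sroot R i))

lemma pos_ne_neg_sroot {x : V} (hx : x ∈ R.pos) (i : ι) : x ≠ -R.sroot i := by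
  intro h
  exact not_pos_and_neg R hx (by rw [h, neg_neg]; exact sroot_pos R i)

lemma ht_pos_ge_one {a : V} (ha : a ∈ R.pos) : 1 ≤ ht R a := by
  rw [ht_eq_htN R ha]
  exact_mod_cast htN_pos R ha

/-- The key length lower bounds, by induction on the word. -/
lemma LB (hF : Fund R θ i0) :
    ∀ (l : List ι) (x : V), x ∈ R.Δ → pw R l x = R.sroot i0 →
      ((cf R x i0 = 1 → ht R x - 1 ≤ (l.length : ℝ)) ∧
       (cf R x i0 = 0 → x ∈ R.pos → ht R x ≤ (l.length : ℝ)) ∧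
       (x = θ → ht R θ - 1 ≤ (l.length : ℝ))) := by
  intro l
  induction l using List.reverseRecOn with
  | nil =>
      intro x hx hpw
      have hxa : x = R.sroot i0 := hpw
      subst hxa
      refine ⟨fun _ => ?_, fun h0 _ => ?_, fun hth => ?_⟩
      · rw [ht_sroot R i0]
        simp
      · exfalso
        rw [cf_sroot R i0] at h0
        simp at h0
      · exact absurd hth.symm (theta_ne_sroot R hF i0)
  | append_singleton l i ihl =>
      intro x hx hpw
      rw [pw_concat] at hpw
      have hpw' : pw R l (R.reflect (R.sroot i) x) = R.sroot i0 := hpw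
      set y := R.reflect (R.sroot i) x with hy_def
      have hyΔ : y ∈ R.Δ := R.reflect_root_mem _ (R.sroot_mem i) x hx
      have hLlen : ((l ++ [i]).length : ℝ) = (l.length : ℝ) + 1 := by
        simp
      have IH := ihl y hyΔ hpw'
      rw [hLlen]
      have hLnn : (0:ℝ) ≤ (l.length : ℝ) := Nat.cast_nonneg _
      rcases eq_or_ne x (R.sroot i) with rfl | hne1
      · refine ⟨fun h1 => ?_, fun h0 _ => ?_, fun hth => ?_⟩
        · rw [ht_sroot R i]
          linarith
        · rw [ht_sroot R i]
          linarith
        · exact absurd hth.symm (theta_ne_sroot R hF i)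
      rcases eq_or_ne x (-R.sroot i) with rfl | hne2
      · refine ⟨fun h1 => ?_, fun h0 hxpos => ?_, fun hth => ?_⟩
        · exfalso
          rw [cf_neg_sroot R i] at h1
          simp only [Pi.neg_apply] at h1
          by_cases hii : i0 = i <;> simp [hii] at h1 <;> norm_num at h1
        · exact absurd rfl (pos_ne_neg_sroot R hxpos i)
        · exfalso
          have := cf_nonneg_of_pos R (theta_pos R hF) i
          rw [← hth, cf_neg_sroot R i] at this
          simp at this
          norm_num at this
      rcases cf_int_cases R hF hx i hne1 hne2 with hpair | hpair | hpair
      · -- ⟪αᵢ,x⟫ = t/2 : y = x - αᵢ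
        have hyx : y = x - R.sroot i := by rw [hy_def, refl_eq_sub R hF i hpair]
        have hcfy : cf R y = cf R x - ((fun j => if j = i then 1 else 0) : ι → ℝ) := by
          rw [hyx]
          exact cf_sub_sroot R (root_rep R hx) i
        have hhty : ht R y = ht R x - 1 := by
          rw [hyx]
          exact ht_sub_sroot R (root_rep R hx) i
        refine ⟨fun h1 => ?_, fun h0 hxpos => ?_, fun hth => ?_⟩
        · rcases eq_or_ne i i0 with hii | hii
          · -- level drops to 0; y is positive level-0
            subst hii
            have hsub := lvl1_sub_alpha R hF hx h1 hpair hne1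
            have hy0 : cf R y i = 0 := by
              rw [hcfy]
              simp [h1]
            have := (IH.2.1) hy0 (hyx ▸ hsub.1)
            linarith
          · have hy1 : cf R y i0 = 1 := by
              rw [hcfy]
              simp [Ne.symm hii, h1]
            have := IH.1 hy1
            linarith
        · rcases eq_or_ne i i0 with hii | hii
          · exfalso
            subst hii
            rcases lvl0_inner_alpha R hF hxpos h0 with hz | hz <;>
              rw [hpair] at hz <;> have ht2 := t_pos R hF <;> linarith
          · have hypos : y ∈ R.pos := by
              rcases root_pos_or_neg R hyΔ with hp | hp
              · exact hp
              · exfalso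
                have hzz : ∀ j, j ≠ i → cf R x j = 0 := by
                  intro j hj
                  have hnn := cf_nonneg_of_pos R hp j
                  rw [cf_neg R (root_rep R hyΔ)] at hnn
                  simp only [Pi.neg_apply] at hnn
                  rw [hcfy] at hnn
                  simp only [Pi.sub_apply, if_neg hj] at hnn
                  have h3 := cf_nonneg_of_pos R hxpos j
                  linarith
                rcases root_supp_single R hF hx i hzz with h' | h'
                · exact hne1 h'
                · exact hne2 h'
            have hy0 : cf R y i0 = 0 := by
              rw [hcfy]
              simp [Ne.symm hii, h0]
            have := IH.2.1 hy0 hypos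
            linarith
        · rcases eq_or_ne i i0 with hii | hii
          · subst hii
            have hy1 : cf R y i = 1 := by
              rw [hcfy, hth]
              simp [cf_theta_i0 R hF]
              norm_num
            have h5 := IH.1 hy1
            have h6 : ht R y = ht R θ - 1 := by rw [hhty, hth]
            rw [h6] at h5
            linarith
          · exfalso
            have h0' : ⟪R.sroot i, θ⟫ = 0 := by
              rw [real_inner_comm]
              exact hF.2.2.2 i hii
            rw [hth, h0'] at hpair
            have ht2 := t_pos R hF
            linarith
      · -- ⟪αᵢ,x⟫ = 0 : y = x
        have hyx : y = x := by rw [hy_def, refl_eq_self R i hpair]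
        rw [hyx] at IH
        refine ⟨fun h1 => ?_, fun h0 hxpos => ?_, fun hth => ?_⟩
        · have := IH.1 h1; linarith
        · have := IH.2.1 h0 hxpos; linarith
        · have := IH.2.2 hth; linarith
      · -- ⟪αᵢ,x⟫ = -t/2 : y = x + αᵢ
        have hyx : y = x + R.sroot i := by rw [hy_def, refl_eq_add R hF i hpair]
        have hcfy : cf R y = cf R x + ((fun j => if j = i then 1 else 0) : ι → ℝ) := by
          rw [hyx]
          exact cf_add_sroot R (root_rep R hx) i
        have hhty : ht R y = ht R x + 1 := by
          rw [hyx]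
          exact ht_add_sroot R (root_rep R hx) i
        refine ⟨fun h1 => ?_, fun h0 hxpos => ?_, fun hth => ?_⟩
        · rcases eq_or_ne i i0 with hii | hii
          · subst hii
            have hy2 : cf R y i = 2 := by
              rw [hcfy]
              simp [h1]
              norm_num
            have hyθ : y = θ := eq_theta_of_lvl2 R hF hyΔ hy2
            have h5 := IH.2.2 hyθ
            have h6 : ht R θ = ht R x + 1 := by rw [← hyθ, hhty]
            rw [h6] at h5
            linarith
          · have hy1 : cf R y i0 = 1 := by
              rw [hcfy]
              simp [Ne.symm hii, h1]
            have := IH.1 hy1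
            linarith
        · have hypos : y ∈ R.pos := by
            apply pos_of_cf_pos R hyΔ (k := i)
            rw [hcfy]
            have := cf_nonneg_of_pos R hxpos i
            simp only [Pi.add_apply, if_pos rfl]
            simp
            linarith
          rcases eq_or_ne i i0 with hii | hii
          · subst hii
            have hy1 : cf R y i = 1 := by
              rw [hcfy]
              simp [h0]
            have := IH.1 hy1
            linarith
          · have hy0 : cf R y i0 = 0 := by
              rw [hcfy]
              simp [Ne.symm hii, h0]
            have := IH.2.1 hy0 hypos
            linarith
        · exfalso
          have ht2 := t_pos R hF
          rw [hth] at hpair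
          rcases eq_or_ne i i0 with hii | hii
          · subst hii
            rw [inner_alpha_theta R hF] at hpair
            linarith
          · have h0' : ⟪R.sroot i, θ⟫ = 0 := by
              rw [real_inner_comm]
              exact hF.2.2.2 i hii
            rw [h0'] at hpair
            linarith


/-- Existence: a level-1 root can be carried to `α̂` by a `J`-word of length `ht - 1`. -/
lemma EX (hF : Fund R θ i0) :
    ∀ (n : ℕ) (μ : V), μ ∈ R.Δ → cf R μ i0 = 1 → htN R μ = n →
      ∃ l : List ι, (∀ j ∈ l, j ≠ i0) ∧ pw R l μ = R.sroot i0 ∧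
        (l.length : ℝ) = ht R μ - 1 := by
  intro n
  induction n using Nat.strong_induction_on with
  | _ n IH =>
      intro μ hμ h1 hn
      have hμpos : μ ∈ R.pos := pos_of_cf_pos R hμ (k := i0) (by rw [h1]; norm_num)
      rcases eq_or_ne μ (R.sroot i0) with rfl | hne
      · exact ⟨[], by simp, rfl, by rw [ht_sroot R i0]; simp⟩
      · -- find j ≠ i0 with positive pairing
        have hexp : ⟪μ, μ⟫ = ∑ j, cf R μ j * ⟪R.sroot j, μ⟫ := by
          have hr := cf_rep R (root_rep R hμ)
          rw [Rep] at hr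
          calc ⟪μ, μ⟫ = ⟪∑ j, cf R μ j • R.sroot j, μ⟫ := by rw [← hr]
          _ = ∑ j, cf R μ j * ⟪R.sroot j, μ⟫ := by
              rw [sum_inner]
              exact Finset.sum_congr rfl fun j _ => real_inner_smul_left _ _ _
        have ht2 := t_pos R hF
        have hmut : ⟪μ, μ⟫ = ⟪θ, θ⟫ := norm_root R hF hμ
        have hne2 : μ ≠ -R.sroot i0 := by
          intro h
          rw [h, cf_neg_sroot R i0] at h1
          simp at h1
          norm_num at h1
        have hub : ⟪R.sroot i0, μ⟫ ≤ ⟪θ, θ⟫/2 := by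
          rcases cf_int_cases R hF hμ i0 hne hne2 with h | h | h <;> rw [h] <;> linarith
        have hexists : ∃ j, j ≠ i0 ∧ 0 < cf R μ j * ⟪R.sroot j, μ⟫ := by
          by_contra hc
          push_neg at hc
          have hle : ∑ x ∈ Finset.univ.erase i0,
              (fun j => cf R μ j * ⟪R.sroot j, μ⟫) x ≤ 0 :=
            Finset.sum_nonpos (fun j hj => hc j (Finset.mem_erase.mp hj).1)
          have hsplit := Finset.add_sum_erase Finset.univ
            (fun j => cf R μ j * ⟪R.sroot j, μ⟫) (Finset.mem_univ i0)
          simp only [] at hsplit hle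
          have hsum : ∑ j, cf R μ j * ⟪R.sroot j, μ⟫ ≤
              cf R μ i0 * ⟪R.sroot i0, μ⟫ := by
            rw [← hsplit]
            linarith
          rw [← hexp, hmut, h1, one_mul] at hsum
          linarith
        obtain ⟨j, hj, hjpos⟩ := hexists
        have hcfj : 0 ≤ cf R μ j := cf_nonneg_of_pos R hμpos j
        have hinnerj : 0 < ⟪R.sroot j, μ⟫ := by
          rcases le_or_gt ⟪R.sroot j, μ⟫ 0 with h | h
          · nlinarith
          · exact h
        have hμnej : μ ≠ R.sroot j := by
          intro h
          rw [h, cf_sroot R j] at h1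
          simp [Ne.symm hj] at h1
        have hμnej2 : μ ≠ -R.sroot j := by
          intro h
          rw [h, cf_neg_sroot R j] at h1
          simp [Ne.symm hj] at h1
        have hpairj : ⟪R.sroot j, μ⟫ = ⟪θ, θ⟫/2 := by
          rcases cf_int_cases R hF hμ j hμnej hμnej2 with h | h | h
          · exact h
          · rw [h] at hinnerj; linarith
          · rw [h] at hinnerj; linarith
        set μ' := μ - R.sroot j with hμ'def
        have hμ'Δ : μ' ∈ R.Δ := by
          rw [hμ'def, ← refl_eq_sub R hF j hpairj]
          exact R.reflect_root_mem _ (R.sroot_mem j) μ hμ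
        have hcfμ' : cf R μ' i0 = 1 := by
          rw [hμ'def, cf_sub_sroot R (root_rep R hμ) j]
          simp [Ne.symm hj, h1]
        have hhtμ' : ht R μ' = ht R μ - 1 := by
          rw [hμ'def]
          exact ht_sub_sroot R (root_rep R hμ) j
        have hμ'pos : μ' ∈ R.pos := pos_of_cf_pos R hμ'Δ (k := i0) (by rw [hcfμ']; norm_num)
        have hhtN' : htN R μ' < n := by
          have e1 : ht R μ' = (htN R μ' : ℝ) := ht_eq_htN R hμ'pos
          have e2 : ht R μ = (htN R μ : ℝ) := ht_eq_htN R hμpos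
          rw [e1, e2] at hhtμ'
          have : (htN R μ' : ℝ) < (htN R μ : ℝ) := by linarith
          rw [hn] at this
          exact_mod_cast this
        obtain ⟨l', hno', hpw', hlen'⟩ := IH (htN R μ') hhtN' μ' hμ'Δ hcfμ' rfl
        refine ⟨l' ++ [j], ?_, ?_, ?_⟩
        · intro k hk
          rcases List.mem_append.mp hk with h | h
          · exact hno' k h
          · rw [List.mem_singleton.mp h]
            exact hj
        · rw [pw_concat]
          show pw R l' (R.reflect (R.sroot j) μ) = R.sroot i0
          rw [refl_eq_sub R hF j hpairj]
          exact hpw'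
        · rw [List.length_append]
          push_cast
          rw [hlen']
          rw [hhtμ']
          simp


/-- Main structural theorem: a minimal-length element carrying a level-1 root `μ` to
`α̂` is a product of `J`-reflections, of length `ht μ - 1`. -/
lemma Athm (hF : Fund R θ i0) :
    ∀ (n : ℕ) (v : V ≃ₗ[ℝ] V), v ∈ R.W → R.len v = n →
      ∀ (μ : V), μ ∈ R.Δ → cf R μ i0 = 1 → v μ = R.sroot i0 →
      (∀ w' ∈ R.W, w' μ = R.sroot i0 → R.len v ≤ R.len w') →
      ∃ l : List ι, (∀ j ∈ l, j ≠ i0) ∧ pw R l = v ∧ (l.length : ℝ) = ht R μ - 1 := by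
  intro n
  induction n using Nat.strong_induction_on with
  | _ n IHn =>
  intro v hvW hlen μ hμ h1 happ hmin
  obtain ⟨l₀, hno₀, happ₀, hlen₀⟩ := EX R hF (htN R μ) μ hμ h1 rfl
  have hup : R.len v ≤ l₀.length :=
    le_trans (hmin (pw R l₀) (pw_mem_W R l₀) happ₀) (len_le R rfl)
  obtain ⟨l, hpwl, hlenl⟩ := len_spec R hvW
  have hlow : ht R μ - 1 ≤ (l.length : ℝ) :=
    (LB R hF l μ hμ (by rw [hpwl]; exact happ)).1 h1
  have hexact : (n : ℝ) = ht R μ - 1 := by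
    have e1 : (R.len v : ℝ) ≤ ht R μ - 1 := by
      rw [← hlen₀]
      exact_mod_cast hup
    have e2 : (l.length : ℝ) = (n : ℝ) := by
      rw [hlenl, hlen]
    rw [hlen] at e1
    rw [e2] at hlow
    linarith
  rcases l.eq_nil_or_concat with rfl | ⟨l', i, rfl⟩
  · have hv1 : v = 1 := by rw [← hpwl]; rfl
    refine ⟨[], by simp, by rw [hv1]; rfl, ?_⟩
    have hn0 : n = 0 := by
      rw [← hlen, ← hlenl]
      rfl
    rw [hn0] at hexact
    simp at hexact ⊢
    linarith
  · rw [List.concat_eq_append] at hpwl hlenl hlow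
    have hlenl' : l'.length + 1 = n := by
      rw [← hlen, ← hlenl, List.length_append]
      simp
    have hlr : ((l'.length : ℕ) : ℝ) = (n : ℝ) - 1 := by
      have h9 : ((l'.length : ℝ) + 1) = (n:ℝ) := by exact_mod_cast hlenl'
      linarith
    have hzW : pw R l' ∈ R.W := pw_mem_W R l'
    have hzlen : R.len (pw R l') ≤ l'.length := len_le R rfl
    have happz : pw R l' (R.reflect (R.sroot i) μ) = R.sroot i0 := by
      have : (pw R l' * R.reflect (R.sroot i)) μ = R.sroot i0 := by
        rw [← pw_concat R l' i, hpwl]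
        exact happ
      exact this
    have hn1 : 1 ≤ n := by omega
    have hμalpha : μ ≠ R.sroot i0 := by
      intro h
      rw [h, ht_sroot R i0] at hexact
      have : (n:ℝ) = 0 := by linarith
      have : n = 0 := by exact_mod_cast this
      omega
    have hμnei : μ ≠ R.sroot i := by
      intro h
      rcases eq_or_ne i i0 with rfl | hii
      · exact hμalpha h
      · rw [h, cf_sroot R i] at h1
        simp [Ne.symm hii] at h1
    have hμnei2 : μ ≠ -R.sroot i := by
      intro h
      rw [h, cf_neg_sroot R i] at h1
      simp only [Pi.neg_apply] at h1
      by_cases hii : i0 = i <;> simp [hii] at h1 <;> norm_num at h1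
    rcases cf_int_cases R hF hμ i hμnei hμnei2 with hp | hp | hp
    · -- ⟪αᵢ,μ⟫ = t/2 : descend
      have hyx : R.reflect (R.sroot i) μ = μ - R.sroot i := refl_eq_sub R hF i hp
      rcases eq_or_ne i i0 with rfl | hii
      · exfalso
        have hsub := lvl1_sub_alpha R hF hμ h1 hp hμalpha
        have happη : pw R l' (μ - R.sroot i) = R.sroot i := by
          rw [← hyx]
          exact happz
        have hLB := (LB R hF l' (μ - R.sroot i) hsub.1.1 happη).2.1 hsub.2 hsub.1
        have hhtη : ht R (μ - R.sroot i) = ht R μ - 1 :=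
          ht_sub_sroot R (root_rep R hμ) i
        rw [hhtη, hlr] at hLB
        linarith
      · -- i ∈ J : recurse
        have hμ'Δ : μ - R.sroot i ∈ R.Δ := by
          have := R.reflect_root_mem _ (R.sroot_mem i) μ hμ
          rwa [hyx] at this
        have hcf' : cf R (μ - R.sroot i) i0 = 1 := by
          rw [cf_sub_sroot R (root_rep R hμ) i]
          simp [Ne.symm hii, h1]
        have hht' : ht R (μ - R.sroot i) = ht R μ - 1 := ht_sub_sroot R (root_rep R hμ) i
        have happ' : pw R l' (μ - R.sroot i) = R.sroot i0 := by
          rw [← hyx]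
          exact happz
        have hminz : ∀ w' ∈ R.W, w' (μ - R.sroot i) = R.sroot i0 →
            R.len (pw R l') ≤ R.len w' := by
          intro w' hw' happw'
          have hcomp : (w' * R.reflect (R.sroot i)) μ = R.sroot i0 := by
            show w' (R.reflect (R.sroot i) μ) = R.sroot i0
            rw [hyx]
            exact happw'
          have h2 := hmin (w' * R.reflect (R.sroot i))
            (Subgroup.mul_mem _ hw' (refl_mem_W R i)) hcomp
          have h3 := len_mul_refl_le R hw' i
          rw [hlen] at h2
          omega
        have hzn : R.len (pw R l') < n := by omega
        obtain ⟨l'', hno'', hpw'', hlen''⟩ := IHn (R.len (pw R l')) hzn (pw R l') hzW rfl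
          (μ - R.sroot i) hμ'Δ hcf' happ' hminz
        refine ⟨l'' ++ [i], ?_, ?_, ?_⟩
        · intro k hk
          rcases List.mem_append.mp hk with h | h
          · exact hno'' k h
          · rw [List.mem_singleton.mp h]
            exact hii
        · rw [pw_concat, hpw'', ← pw_concat]
          exact hpwl
        · -- length computation : need len (pw l') = n - 1
          rw [List.length_append]
          push_cast
          rw [hlen'', hht']
          simp
    · -- ⟪αᵢ,μ⟫ = 0 : contradiction with minimality
      exfalso
      have hyx : R.reflect (R.sroot i) μ = μ := refl_eq_self R i hp
      have := hmin (pw R l') hzW (by rw [← hyx]; exact happz)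
      rw [hlen] at this
      omega
    · -- ⟪αᵢ,μ⟫ = -t/2 : contradictions via LB
      exfalso
      have hyx : R.reflect (R.sroot i) μ = μ + R.sroot i := refl_eq_add R hF i hp
      have hyΔ : μ + R.sroot i ∈ R.Δ := by
        rw [← hyx]
        exact R.reflect_root_mem _ (R.sroot_mem i) μ hμ
      have happy : pw R l' (μ + R.sroot i) = R.sroot i0 := by
        rw [← hyx]
        exact happz
      have hhty : ht R (μ + R.sroot i) = ht R μ + 1 := ht_add_sroot R (root_rep R hμ) i
      rcases eq_or_ne i i0 with rfl | hii
      · have hy2 : cf R (μ + R.sroot i) i = 2 := by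
          rw [cf_add_sroot R (root_rep R hμ) i]
          simp [h1]
          norm_num
        have hyθ : μ + R.sroot i = θ := eq_theta_of_lvl2 R hF hyΔ hy2
        have hLB := (LB R hF l' (μ + R.sroot i) hyΔ happy).2.2 hyθ
        rw [← hyθ, hhty, hlr] at hLB
        linarith
      · have hy1 : cf R (μ + R.sroot i) i0 = 1 := by
          rw [cf_add_sroot R (root_rep R hμ) i]
          simp [Ne.symm hii, h1]
        have hLB := (LB R hF l' (μ + R.sroot i) hyΔ happy).1 hy1
        rw [hhty, hlr] at hLB
        linarith


/-! ### Conjugation, the exchange property, inversion sets -/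

lemma conj_reflect {u : V ≃ₗ[ℝ] V} (hu : u ∈ R.W) {a : V} (ha : a ∈ R.Δ) :
    u * R.reflect a * u⁻¹ = R.reflect (u a) := by
  apply LinearEquiv.ext
  intro x
  show u (R.reflect a (u⁻¹ x)) = R.reflect (u a) x
  rw [R.reflect_apply a ha (u⁻¹ x), R.reflect_apply (u a) (W_root R hu ha) x,
    map_sub, map_smul]
  have e0 : u (u⁻¹ x) = x := by
    have h : (u * u⁻¹) x = (1 : V ≃ₗ[ℝ] V) x := by rw [mul_inv_cancel]
    exact h
  have e1 : ⟪a, u⁻¹ x⟫ = ⟪u a, x⟫ := by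
    calc ⟪a, u⁻¹ x⟫ = ⟪u a, u (u⁻¹ x)⟫ := (W_inner R hu _ _).symm
    _ = ⟪u a, x⟫ := by rw [e0]
  have e2 : ⟪a, a⟫ = ⟪u a, u a⟫ := (W_inner R hu a a).symm
  rw [e0, e1, e2]

lemma conj_reflect' {u : V ≃ₗ[ℝ] V} (hu : u ∈ R.W) {a : V} (ha : a ∈ R.Δ) :
    u * R.reflect a = R.reflect (u a) * u := by
  have := conj_reflect R hu ha
  calc u * R.reflect a = u * R.reflect a * u⁻¹ * u := by group
  _ = R.reflect (u a) * u := by rw [this]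

/-- simple reflections permute the positive roots other than the simple root itself. -/
lemma perm_pos (hF : Fund R θ i0) {δ : V} (hδ : δ ∈ R.pos) (i : ι)
    (hne : δ ≠ R.sroot i) : R.reflect (R.sroot i) δ ∈ R.pos := by
  have hδΔ : δ ∈ R.Δ := hδ.1
  have hyΔ : R.reflect (R.sroot i) δ ∈ R.Δ := R.reflect_root_mem _ (R.sroot_mem i) δ hδΔ
  have hne2 : δ ≠ -R.sroot i := pos_ne_neg_sroot R hδ i
  rcases cf_int_cases R hF hδΔ i hne hne2 with hp | hp | hp
  · have hyx : R.reflect (R.sroot i) δ = δ - R.sroot i := refl_eq_sub R hF i hp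
    rcases root_pos_or_neg R hyΔ with h | h
    · exact h
    · exfalso
      have hcfy : cf R (δ - R.sroot i) =
          cf R δ - ((fun j => if j = i then 1 else 0) : ι → ℝ) :=
        cf_sub_sroot R (root_rep R hδΔ) i
      rw [hyx] at h
      have hzz : ∀ j, j ≠ i → cf R δ j = 0 := by
        intro j hj
        have hnn := cf_nonneg_of_pos R h j
        rw [cf_neg R ⟨_, rep_sub R (cf_rep R (root_rep R hδΔ)) (rep_sroot R i)⟩] at hnn
        simp only [Pi.neg_apply] at hnn
        rw [hcfy] at hnn
        simp only [Pi.sub_apply, if_neg hj] at hnn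
        have h3 := cf_nonneg_of_pos R hδ j
        linarith
      rcases root_supp_single R hF hδΔ i hzz with h' | h'
      · exact hne h'
      · exact hne2 h'
  · rw [refl_eq_self R i hp]
    exact hδ
  · rw [refl_eq_add R hF i hp]
    refine pos_of_cf_pos R (by rw [← refl_eq_add R hF i hp]; exact hyΔ) (k := i) ?_
    rw [cf_add_sroot R (root_rep R hδΔ) i]
    simp only [Pi.add_apply, if_pos rfl]
    have := cf_nonneg_of_pos R hδ i
    simp
    linarith

/-- Strong exchange (word surgery). -/
lemma surgery (hF : Fund R θ i0) :
    ∀ (l : List ι) (δ : V), δ ∈ R.pos → -(pw R l δ) ∈ R.pos →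
      ∃ l₂ : List ι, pw R l * R.reflect δ = pw R l₂ ∧ l₂.length + 1 = l.length := by
  intro l
  induction l with
  | nil =>
      intro δ hδ hneg
      exfalso
      exact not_pos_and_neg R hδ hneg
  | cons i l' IH =>
      intro δ hδ hneg
      by_cases hcase : -(pw R l' δ) ∈ R.pos
      · obtain ⟨l₂, he, hlen⟩ := IH δ hδ hcase
        refine ⟨i :: l₂, ?_, by simp [hlen]⟩
        rw [pw_cons, pw_cons, mul_assoc, he]
      · have huδ : pw R l' δ ∈ R.Δ := W_root R (pw_mem_W R l') hδ.1
        have hpos : pw R l' δ ∈ R.pos := by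
          rcases root_pos_or_neg R huδ with h | h
          · exact h
          · exact absurd h hcase
        have heq : pw R l' δ = R.sroot i := by
          by_contra hne
          have := perm_pos R hF hpos i hne
          rw [pw_cons] at hneg
          exact not_pos_and_neg R this (by exact hneg)
        refine ⟨l', ?_, rfl⟩
        have hconj := conj_reflect' R (pw_mem_W R l') hδ.1
        rw [heq] at hconj
        rw [pw_cons, mul_assoc, hconj, ← mul_assoc, refl_sq R (R.sroot_mem i), one_mul]

/-- Strong exchange: length decreases. -/
lemma strong_exchange (hF : Fund R θ i0) {w : V ≃ₗ[ℝ] V} (hw : w ∈ R.W) {δ : V}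
    (hδ : δ ∈ R.pos) (hneg : -(w δ) ∈ R.pos) :
    R.len (w * R.reflect δ) < R.len w := by
  obtain ⟨l, hpwl, hlenl⟩ := len_spec R hw
  obtain ⟨l₂, he, hlen⟩ := surgery R hF l δ hδ (by rw [hpwl]; exact hneg)
  calc R.len (w * R.reflect δ) ≤ l₂.length := len_le R (by rw [← he, hpwl])
  _ < l.length := by omega
  _ = R.len w := hlenl

/-- Reflections in arbitrary positive roots lie in the Weyl group. -/
lemma refl_pos_mem_W (hF : Fund R θ i0) :
    ∀ (n : ℕ) (δ : V), δ ∈ R.pos → htN R δ = n → R.reflect δ ∈ R.W := by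
  intro n
  induction n using Nat.strong_induction_on with
  | _ n IH =>
  intro δ hδ hn
  have hδΔ : δ ∈ R.Δ := hδ.1
  by_cases hsimple : ∃ i, δ = R.sroot i
  · obtain ⟨i, rfl⟩ := hsimple
    exact refl_mem_W R i
  · push_neg at hsimple
    have hexp : ⟪δ, δ⟫ = ∑ j, cf R δ j * ⟪R.sroot j, δ⟫ := by
      have hr := cf_rep R (root_rep R hδΔ)
      rw [Rep] at hr
      calc ⟪δ, δ⟫ = ⟪∑ j, cf R δ j • R.sroot j, δ⟫ := by rw [← hr]
      _ = ∑ j, cf R δ j * ⟪R.sroot j, δ⟫ := by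
          rw [sum_inner]
          exact Finset.sum_congr rfl fun j _ => real_inner_smul_left _ _ _
    have ht2 := t_pos R hF
    have hmut : ⟪δ, δ⟫ = ⟪θ, θ⟫ := norm_root R hF hδΔ
    have hexists : ∃ j, 0 < cf R δ j * ⟪R.sroot j, δ⟫ := by
      by_contra hc
      push_neg at hc
      have : ∑ j, cf R δ j * ⟪R.sroot j, δ⟫ ≤ 0 :=
        Finset.sum_nonpos (fun j _ => hc j)
      rw [← hexp, hmut] at this
      linarith
    obtain ⟨j, hjpos⟩ := hexists
    have hcfj : 0 ≤ cf R δ j := cf_nonneg_of_pos R hδ j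
    have hinnerj : 0 < ⟪R.sroot j, δ⟫ := by
      rcases le_or_gt ⟪R.sroot j, δ⟫ 0 with h | h
      · nlinarith
      · exact h
    have hnej : δ ≠ R.sroot j := hsimple j
    have hnej2 : δ ≠ -R.sroot j := pos_ne_neg_sroot R hδ j
    have hpairj : ⟪R.sroot j, δ⟫ = ⟪θ, θ⟫/2 := by
      rcases cf_int_cases R hF hδΔ j hnej hnej2 with h | h | h
      · exact h
      · rw [h] at hinnerj; linarith
      · rw [h] at hinnerj; linarith
    have hδ' : R.reflect (R.sroot j) δ = δ - R.sroot j := refl_eq_sub R hF j hpairj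
    have hδ'pos : δ - R.sroot j ∈ R.pos := by
      rw [← hδ']
      exact perm_pos R hF hδ j hnej
    have hht' : ht R (δ - R.sroot j) = ht R δ - 1 := ht_sub_sroot R (root_rep R hδΔ) j
    have hhtN' : htN R (δ - R.sroot j) < n := by
      have e1 : ht R (δ - R.sroot j) = (htN R (δ - R.sroot j) : ℝ) := ht_eq_htN R hδ'pos
      have e2 : ht R δ = (htN R δ : ℝ) := ht_eq_htN R hδ
      rw [e1, e2] at hht'
      have : (htN R (δ - R.sroot j) : ℝ) < (htN R δ : ℝ) := by linarith
      rw [hn] at this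
      exact_mod_cast this
    have hIH : R.reflect (δ - R.sroot j) ∈ R.W :=
      IH (htN R (δ - R.sroot j)) hhtN' (δ - R.sroot j) hδ'pos rfl
    have hconj := conj_reflect R (refl_mem_W R j) (hδ'pos.1)
    have happ : R.reflect (R.sroot j) (δ - R.sroot j) = δ := by
      rw [map_sub, hδ', refl_self R (R.sroot_mem j)]
      abel
    rw [happ] at hconj
    rw [← hconj]
    exact Subgroup.mul_mem _ (Subgroup.mul_mem _ (refl_mem_W R j) hIH)
      (Subgroup.inv_mem _ (refl_mem_W R j))

/-- Descent criterion : if the length decreases when multiplying by a simple reflection,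
the corresponding simple root is inverted. -/
lemma descent_neg (hF : Fund R θ i0) {w : V ≃ₗ[ℝ] V} (hw : w ∈ R.W) (i : ι)
    (hlt : R.len (w * R.reflect (R.sroot i)) < R.len w) :
    -(w (R.sroot i)) ∈ R.pos := by
  have hΔ : w (R.sroot i) ∈ R.Δ := W_root R hw (R.sroot_mem i)
  rcases root_pos_or_neg R hΔ with hp | hp
  · exfalso
    have hws : w * R.reflect (R.sroot i) ∈ R.W :=
      Subgroup.mul_mem _ hw (refl_mem_W R i)
    have hneg : -((w * R.reflect (R.sroot i)) (R.sroot i)) ∈ R.pos := by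
      show -(w (R.reflect (R.sroot i) (R.sroot i))) ∈ R.pos
      rw [refl_self R (R.sroot_mem i), map_neg, neg_neg]
      exact hp
    have := strong_exchange R hF hws (sroot_pos R i) hneg
    rw [mul_assoc, refl_sq R (R.sroot_mem i), mul_one] at this
    omega
  · exact hp


lemma refl_eq_sub' (hF : Fund R θ i0) {a x : V} (ha : a ∈ R.Δ)
    (hx : ⟪a, x⟫ = ⟪θ, θ⟫/2) : R.reflect a x = x - a := by
  rw [R.reflect_apply a ha x, hx, norm_root R hF ha]
  have ht := t_pos R hF
  have : (2 * (⟪θ, θ⟫ / 2) / ⟪θ, θ⟫ : ℝ) = 1 := by field_simp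
  rw [this, one_smul]

lemma inner_theta_pw (hF : Fund R θ i0) {l : List ι} (hl : ∀ j ∈ l, j ≠ i0) (x : V) :
    ⟪θ, pw R l x⟫ = ⟪θ, x⟫ := by
  induction l with
  | nil => rfl
  | cons i l ihl =>
      rw [pw_cons]
      show ⟪θ, R.reflect (R.sroot i) (pw R l x)⟫ = ⟪θ, x⟫
      have h1 : θ = R.reflect (R.sroot i) θ :=
        (sJ_fixes_theta R hF (hl i List.mem_cons_self)).symm
      calc ⟪θ, R.reflect (R.sroot i) (pw R l x)⟫
          = ⟪R.reflect (R.sroot i) θ, R.reflect (R.sroot i) (pw R l x)⟫ := by rw [← h1]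
      _ = ⟪θ, pw R l x⟫ := refl_inner R (R.sroot_mem i) _ _
      _ = ⟪θ, x⟫ := ihl (fun j hj => hl j (List.mem_cons_of_mem i hj))

lemma pos_of_theta_pos (hF : Fund R θ i0) {x : V} (hx : x ∈ R.Δ)
    (h : 0 < ⟪θ, x⟫) : x ∈ R.pos := by
  apply pos_of_cf_pos R hx (k := i0)
  have := inner_theta R hF (root_rep R hx)
  have ht2 := t_pos R hF
  nlinarith

lemma theta_nonneg_of_pos (hF : Fund R θ i0) {x : V} (hx : x ∈ R.pos) :
    0 ≤ ⟪θ, x⟫ := by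
  rw [inner_theta R hF (root_rep R hx.1)]
  have := cf_nonneg_of_pos R hx i0
  have ht2 := t_pos R hF
  positivity

lemma ht_add2 {x y : V} (hx : ∃ c, Rep R x c) (hy : ∃ c, Rep R y c) :
    ht R (x + y) = ht R x + ht R y := by
  rw [ht, ht, ht, cf_eq R (rep_add R (cf_rep R hx) (cf_rep R hy))]
  simp only [Pi.add_apply]
  rw [Finset.sum_add_distrib]

lemma mem_N {w : V ≃ₗ[ℝ] V} {δ : V} :
    δ ∈ R.N w ↔ δ ∈ R.pos ∧ -(w δ) ∈ R.pos := Iff.rfl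

lemma exists_descent {w : V ≃ₗ[ℝ] V} (hF : Fund R θ i0) (hw : w ∈ R.W) (hne : w ≠ 1) :
    ∃ i : ι, -(w (R.sroot i)) ∈ R.pos ∧
      R.len (w * R.reflect (R.sroot i)) < R.len w := by
  obtain ⟨l, hpwl, hlenl⟩ := len_spec R hw
  rcases l.eq_nil_or_concat with rfl | ⟨l', i, rfl⟩
  · exact absurd hpwl.symm hne
  · rw [List.concat_eq_append] at hpwl hlenl
    have hws : w * R.reflect (R.sroot i) = pw R l' := by
      rw [← hpwl, pw_concat, mul_assoc, refl_sq R (R.sroot_mem i), mul_one]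
    have hlt : R.len (w * R.reflect (R.sroot i)) < R.len w := by
      have h1 : R.len (w * R.reflect (R.sroot i)) ≤ l'.length := len_le R hws.symm
      have h2 : l'.length + 1 = R.len w := by
        rw [← hlenl, List.length_append]
        simp
      omega
    exact ⟨i, descent_neg R hF hw i hlt, hlt⟩

lemma N_step (hF : Fund R θ i0) {u v : V ≃ₗ[ℝ] V} (hu : u ∈ R.W) (hv : v ∈ R.W)
    (h : R.N u = R.N v) (i : ι) :
    R.N (u * R.reflect (R.sroot i)) = R.N (v * R.reflect (R.sroot i)) := by
  have key : ∀ w : V ≃ₗ[ℝ] V, w ∈ R.W → ∀ δ : V,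
      (δ ∈ R.N (w * R.reflect (R.sroot i)) ↔
        (δ = R.sroot i ∧ R.sroot i ∉ R.N w) ∨
        (δ ≠ R.sroot i ∧ δ ∈ R.pos ∧ R.reflect (R.sroot i) δ ∈ R.N w)) := by
    intro w hw δ
    constructor
    · intro hδ
      obtain ⟨hδpos, hδneg⟩ := (mem_N R).mp hδ
      have hδneg' : -(w (R.reflect (R.sroot i) δ)) ∈ R.pos := hδneg
      rcases eq_or_ne δ (R.sroot i) with rfl | hne
      · left
        refine ⟨rfl, fun hmem => ?_⟩
        obtain ⟨_, hneg2⟩ := (mem_N R).mp hmem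
        rw [refl_self R (R.sroot_mem i), map_neg, neg_neg] at hδneg'
        exact not_pos_and_neg R hδneg' hneg2
      · right
        refine ⟨hne, hδpos, (mem_N R).mpr ⟨perm_pos R hF hδpos i hne, hδneg'⟩⟩
    · intro hδ
      rcases hδ with ⟨rfl, hnot⟩ | ⟨hne, hδpos, hmem⟩
      · refine (mem_N R).mpr ⟨sroot_pos R i, ?_⟩
        show -(w (R.reflect (R.sroot i) (R.sroot i))) ∈ R.pos
        rw [refl_self R (R.sroot_mem i), map_neg, neg_neg]
        have hΔ : w (R.sroot i) ∈ R.Δ := W_root R hw (R.sroot_mem i)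
        rcases root_pos_or_neg R hΔ with hp | hp
        · exact hp
        · exact absurd ((mem_N R).mpr ⟨sroot_pos R i, hp⟩) hnot
      · exact (mem_N R).mpr ⟨hδpos, ((mem_N R).mp hmem).2⟩
  ext δ
  rw [key u hu δ, key v hv δ, h]

lemma N_determines (hF : Fund R θ i0) :
    ∀ (n : ℕ) (u v : V ≃ₗ[ℝ] V), u ∈ R.W → v ∈ R.W → R.len u = n →
      R.N u = R.N v → u = v := by
  intro n
  induction n using Nat.strong_induction_on with
  | _ n IH =>
  intro u v hu hv hlen hN
  rcases eq_or_ne u 1 with rfl | hne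
  · by_contra hvne
    obtain ⟨i, hneg, _⟩ := exists_descent R hF hv (Ne.symm hvne)
    have : R.sroot i ∈ R.N v := (mem_N R).mpr ⟨sroot_pos R i, hneg⟩
    rw [← hN] at this
    obtain ⟨hp, hq⟩ := (mem_N R).mp this
    show False
    rw [show (1 : V ≃ₗ[ℝ] V) (R.sroot i) = R.sroot i from rfl] at hq
    exact not_pos_and_neg R hp hq
  · obtain ⟨i, hneg, hlt⟩ := exists_descent R hF hu hne
    have hus : u * R.reflect (R.sroot i) ∈ R.W :=
      Subgroup.mul_mem _ hu (refl_mem_W R i)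
    have hvs : v * R.reflect (R.sroot i) ∈ R.W :=
      Subgroup.mul_mem _ hv (refl_mem_W R i)
    have hNs := N_step R hF hu hv hN i
    have hlt' : R.len (u * R.reflect (R.sroot i)) < n := by omega
    have := IH (R.len (u * R.reflect (R.sroot i))) hlt'
      (u * R.reflect (R.sroot i)) (v * R.reflect (R.sroot i)) hus hvs rfl hNs
    have h2 : u * R.reflect (R.sroot i) * R.reflect (R.sroot i) =
        v * R.reflect (R.sroot i) * R.reflect (R.sroot i) := by rw [this]
    rwa [mul_assoc, mul_assoc, refl_sq R (R.sroot_mem i), mul_one, mul_one] at h2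

/-- Pinning down the inversion set of a minimal element. -/
lemma pinN (hF : Fund R θ i0) {v : V ≃ₗ[ℝ] V} (hv : v ∈ R.W)
    (happ : v (θ - R.sroot i0) = R.sroot i0)
    (hmin : ∀ w' ∈ R.W, w' (θ - R.sroot i0) = R.sroot i0 → R.len v ≤ R.len w')
    {l : List ι} (hno : ∀ j ∈ l, j ≠ i0) (hpwl : pw R l = v) :
    R.N v = {δ | δ ∈ R.pos ∧ cf R δ i0 = 0 ∧ (θ - R.sroot i0) - δ ∈ R.Δ} := by
  have ht2 := t_pos R hF
  have hβΔ : θ - R.sroot i0 ∈ R.Δ := beta_root R hF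
  ext δ
  simp only [Set.mem_setOf_eq]
  constructor
  · intro hδ
    obtain ⟨hδpos, hδneg⟩ := (mem_N R).mp hδ
    have hδΔ : δ ∈ R.Δ := hδpos.1
    -- level of δ is 0
    have hth : ⟪θ, v δ⟫ = ⟪θ, δ⟫ := by
      rw [← hpwl]
      exact inner_theta_pw R hF hno δ
    have hnn1 : 0 ≤ ⟪θ, δ⟫ := theta_nonneg_of_pos R hF hδpos
    have hnn2 : 0 ≤ ⟪θ, -(v δ)⟫ := theta_nonneg_of_pos R hF hδneg
    rw [inner_neg_right] at hnn2
    have hzero : ⟪θ, δ⟫ = 0 := by linarith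
    have hcf0 : cf R δ i0 = 0 := by
      have := inner_theta R hF (root_rep R hδΔ)
      rw [hzero] at this
      have h2 : cf R δ i0 * (⟪θ, θ⟫/2) = 0 := this.symm
      rcases mul_eq_zero.mp h2 with h | h
      · exact h
      · exfalso; linarith
    refine ⟨hδpos, hcf0, ?_⟩
    -- pairing of δ with α̂
    rcases lvl0_inner_alpha R hF hδpos hcf0 with hp | hp
    · -- δ ⊥ β : contradiction with minimality
      exfalso
      have hdb : ⟪δ, θ - R.sroot i0⟫ = 0 := by
        rw [inner_sub_right, real_inner_comm θ δ, hzero, real_inner_comm (R.sroot i0) δ, hp]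
        ring
      have hfix : R.reflect δ (θ - R.sroot i0) = θ - R.sroot i0 :=
        refl_orth R hδΔ hdb
      have hw' : v * R.reflect δ ∈ R.W :=
        Subgroup.mul_mem _ hv (refl_pos_mem_W R hF (htN R δ) δ hδpos rfl)
      have happ' : (v * R.reflect δ) (θ - R.sroot i0) = R.sroot i0 := by
        show v (R.reflect δ (θ - R.sroot i0)) = R.sroot i0
        rw [hfix]
        exact happ
      have := hmin _ hw' happ'
      have := strong_exchange R hF hv hδpos hδneg
      omega
    · -- ⟪α̂,δ⟫ = -t/2 : β - δ is a root
      have hdb : ⟪δ, θ - R.sroot i0⟫ = ⟪θ, θ⟫/2 := by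
        rw [inner_sub_right, real_inner_comm θ δ, hzero, real_inner_comm (R.sroot i0) δ, hp]
        ring
      have := refl_eq_sub' R hF hδΔ (x := θ - R.sroot i0) hdb
      rw [← this]
      exact R.reflect_root_mem δ hδΔ _ hβΔ
  · rintro ⟨hδpos, hcf0, hζΔ⟩
    have hδΔ : δ ∈ R.Δ := hδpos.1
    have hζcf : cf R ((θ - R.sroot i0) - δ) i0 = 1 := by
      rw [cf_eq R (rep_sub R (cf_rep R (root_rep R hβΔ)) (cf_rep R (root_rep R hδΔ)))]
      simp only [Pi.sub_apply]
      rw [cf_beta_i0 R hF, hcf0]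
      ring
    have hζpos : (θ - R.sroot i0) - δ ∈ R.pos :=
      pos_of_cf_pos R hζΔ (k := i0) (by rw [hζcf]; norm_num)
    have hvζpos : v ((θ - R.sroot i0) - δ) ∈ R.pos := by
      apply pos_of_theta_pos R hF (W_root R hv hζΔ)
      have hth : ⟪θ, v ((θ - R.sroot i0) - δ)⟫ = ⟪θ, (θ - R.sroot i0) - δ⟫ := by
        rw [← hpwl]
        exact inner_theta_pw R hF hno _
      rw [hth, inner_theta R hF (root_rep R hζΔ), hζcf, one_mul]
      linarith
    have hsplit : v δ = R.sroot i0 - v ((θ - R.sroot i0) - δ) := by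
      have : v ((θ - R.sroot i0) - δ) = v (θ - R.sroot i0) - v δ := map_sub _ _ _
      rw [happ] at this
      rw [this]
      abel
    have hvδΔ : v δ ∈ R.Δ := W_root R hv hδΔ
    refine (mem_N R).mpr ⟨hδpos, ?_⟩
    rcases root_pos_or_neg R hvδΔ with hp | hp
    · exfalso
      -- α̂ = v δ + v ζ : sum of two positive roots, impossible by heights
      have hsum : R.sroot i0 = v δ + v ((θ - R.sroot i0) - δ) := by
        rw [hsplit]
        abel
      have hhts := ht_add2 R (root_rep R (W_root R hv hδΔ)) (root_rep R (W_root R hv hζΔ))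
      rw [← hsum, ht_sroot R i0] at hhts
      have h1 := ht_pos_ge_one R hp
      have h2 := ht_pos_ge_one R hvζpos
      linarith
    · exact hp


end Stmt17

/-- Suppose `Δ` is simply-laced, `θ` is a fundamental weight and
`α̂ = sroot ih` is the unique simple root not orthogonal to `θ`. If `ŵ` is the
minimal-length element taking `θ - α̂` to `α̂`, then `ŵ θ = θ`, `ŵ α̂ = θ - α̂`,
and `ŵ² = 1`. -/
theorem hat_w_is_involution
    {ι V : Type*} [Fintype ι] [NormedAddCommGroup V] [InnerProductSpace ℝ V]
    (R : RSD ι V) (hsl : R.SimplyLaced) (θ : V) (hθ : R.IsHighest θ) (ih : ι)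
    (hfund1 : ⟪θ, R.coroot (R.sroot ih)⟫ = 1)
    (hfund0 : ∀ j : ι, j ≠ ih → ⟪θ, R.sroot j⟫ = 0)
    (w : V ≃ₗ[ℝ] V) (hw : w ∈ R.W) (hwapp : w (θ - R.sroot ih) = R.sroot ih)
    (hmin : ∀ w' ∈ R.W, w' (θ - R.sroot ih) = R.sroot ih → R.len w ≤ R.len w') :
    w θ = θ ∧ w (R.sroot ih) = θ - R.sroot ih ∧ w * w = 1 := by
  have hF : Stmt17.Fund R θ ih := ⟨hsl, hθ, hfund1, hfund0⟩
  have hβΔ : θ - R.sroot ih ∈ R.Δ := Stmt17.beta_root R hF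
  have hβcf : Stmt17.cf R (θ - R.sroot ih) ih = 1 := Stmt17.cf_beta_i0 R hF
  obtain ⟨l, hno, hpwl, hlen⟩ := Stmt17.Athm R hF (R.len w) w hw rfl
    (θ - R.sroot ih) hβΔ hβcf hwapp hmin
  have hθfix : w θ = θ := by
    rw [← hpwl]
    exact Stmt17.pw_fixes_theta R hF hno
  have hαim : w (R.sroot ih) = θ - R.sroot ih := by
    have h1 : w (θ - (θ - R.sroot ih)) = w θ - w (θ - R.sroot ih) := map_sub _ _ _
    rw [hθfix, hwapp] at h1
    have h2 : θ - (θ - R.sroot ih) = R.sroot ih := by abel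
    rw [h2] at h1
    exact h1
  refine ⟨hθfix, hαim, ?_⟩
  have hwinv : w⁻¹ ∈ R.W := Subgroup.inv_mem _ hw
  have happinv : w⁻¹ (θ - R.sroot ih) = R.sroot ih := by
    have h3 : w⁻¹ (w (R.sroot ih)) = R.sroot ih := by
      have h : (w⁻¹ * w) (R.sroot ih) = (1 : V ≃ₗ[ℝ] V) (R.sroot ih) := by
        rw [inv_mul_cancel]
      exact h
    rw [hαim] at h3
    exact h3
  have hmininv : ∀ w' ∈ R.W, w' (θ - R.sroot ih) = R.sroot ih →
      R.len w⁻¹ ≤ R.len w' := by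
    intro w' hw' happ'
    rw [Stmt17.len_inv R hw]
    exact hmin w' hw' happ'
  obtain ⟨l2, hno2, hpwl2, _⟩ := Stmt17.Athm R hF (R.len w⁻¹) w⁻¹ hwinv rfl
    (θ - R.sroot ih) hβΔ hβcf happinv hmininv
  have hN1 := Stmt17.pinN R hF hw hwapp hmin hno hpwl
  have hN2 := Stmt17.pinN R hF hwinv happinv hmininv hno2 hpwl2
  have heq : w = w⁻¹ := Stmt17.N_determines R hF (R.len w) w w⁻¹ hw hwinv rfl
    (by rw [hN1, hN2])
  calc w * w = w * w⁻¹ := by rw [← heq]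
  _ = 1 := mul_inv_cancel w
end
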